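/- arXiv:1403.5873 — 3 statements merged into one kernel-verified Lean document; each statement's English description precedes it below -/
import Mathlib

section
/- Let C be a star-regular category in which every regular epimorphism is saturating, which has enough trivial objects, and in which N-trivial objects are closed under binary products. Then C is a 2-star-permutable category if and only if the Star-Upper Cuboid Lemma holds in C: for every commutative diagram of the form (7) — in which g: C → D, f: A → B and ḡ: Eq(c)* → S are regular epimorphisms, the three diamonds are stars of pullback relations of these regular epimorphisms along δ: W → D, β: Y → B and δ̄: Eq(w)* → S respectively (so that P = (Eq(w)* ×_S Eq(c)*)*), and the two middle rows Eq(w)* ⇉ W →> Y and Eq(c)* ⇉ C →> A are short star-exact sequences — if the lower row σ: S ⇉ D together with d: D → B is a short star-exact sequence, then the upper row π: P ⇉ (W×_D C)* together with λ: (W×_D C)* → (Y×_B A)* is a short star-exact sequence. -/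
open CategoryTheory CategoryTheory.Limits

universe v u

namespace Paper

variable {𝒞 : Type u} [Category.{v} 𝒞]

/-- `f` is a regular epimorphism: it is a coequaliser of some pair of morphisms. -/
def IsRegEpi {X Y : 𝒞} (f : X ⟶ Y) : Prop :=
  ∃ (Z : 𝒞) (a b : Z ⟶ X), a ≫ f = b ≫ f ∧
    ∀ {T : 𝒞} (h : X ⟶ T), a ≫ h = b ≫ h → ∃! u : Y ⟶ T, f ≫ u = h

/-- Regular epimorphisms are pullback-stable. -/
def RegEpisStable (𝒞 : Type u) [Category.{v} 𝒞] : Prop :=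
  ∀ {P X Y Z : 𝒞} (p₁ : P ⟶ X) (p₂ : P ⟶ Y) (f : X ⟶ Z) (g : Y ⟶ Z),
    IsPullback p₁ p₂ f g → IsRegEpi g → IsRegEpi p₁

/-- Every kernel pair admits a coequaliser. -/
def KernelPairsHaveCoequalisers (𝒞 : Type u) [Category.{v} 𝒞] : Prop :=
  ∀ {R X Y : 𝒞} (f : X ⟶ Y) (a b : R ⟶ X), IsKernelPair f a b →
    ∃ (Q : 𝒞) (q : X ⟶ Q), a ≫ q = b ≫ q ∧
      ∀ {T : 𝒞} (h : X ⟶ T), a ≫ h = b ≫ h → ∃! u : Q ⟶ T, q ≫ u = h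

/-- A relation from `X` to `Y`: a jointly monomorphic span. -/
structure Rel (𝒞 : Type u) [Category.{v} 𝒞] (X Y : 𝒞) where
  R : 𝒞
  p1 : R ⟶ X
  p2 : R ⟶ Y
  jm : ∀ {Z : 𝒞} (a b : Z ⟶ R), a ≫ p1 = b ≫ p1 → a ≫ p2 = b ≫ p2 → a = b

variable {X Y Z : 𝒞}

/-- `ρ` is a subrelation of `σ`. -/
def Rel.le (ρ σ : Rel 𝒞 X Y) : Prop :=
  ∃ j : ρ.R ⟶ σ.R, j ≫ σ.p1 = ρ.p1 ∧ j ≫ σ.p2 = ρ.p2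

/-- `ρ` and `σ` are the same relation (isomorphic as subobjects of `X × Y`). -/
def Rel.equiv (ρ σ : Rel 𝒞 X Y) : Prop := ρ.le σ ∧ σ.le ρ

/-- The opposite relation. -/
def Rel.op (ρ : Rel 𝒞 X Y) : Rel 𝒞 Y X :=
  ⟨ρ.R, ρ.p2, ρ.p1, fun a b h2 h1 => ρ.jm a b h1 h2⟩

/-- A morphism viewed as a relation. -/
def homRel (f : X ⟶ Y) : Rel 𝒞 X Y :=
  ⟨X, 𝟙 X, f, fun a b h _ => by simpa using h⟩

/-- The discrete (diagonal) relation on `X`. -/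
def diagRel (X : 𝒞) : Rel 𝒞 X X := homRel (𝟙 X)

/-- The kernel pair `Eq(f)` of `f` as a relation on `X`. -/
noncomputable def kerPairRel [HasPullbacks 𝒞] (f : X ⟶ Y) : Rel 𝒞 X X :=
  ⟨pullback f f, pullback.fst f f, pullback.snd f f,
    fun a b h1 h2 => pullback.hom_ext h1 h2⟩

/-- `τ` is the composite `σρ` (first `ρ` from `X` to `Y`, then `σ` from `Y` to `Z`),
i.e. the (regular epi, jointly mono) factorisation of the span induced on the
pullback of `ρ.p2` and `σ.p1`. -/
def IsRelComp [HasPullbacks 𝒞] (σ : Rel 𝒞 Y Z) (ρ : Rel 𝒞 X Y) (τ : Rel 𝒞 X Z) : Prop :=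
  ∃ e : pullback ρ.p2 σ.p1 ⟶ τ.R, IsRegEpi e ∧
    e ≫ τ.p1 = pullback.fst ρ.p2 σ.p1 ≫ ρ.p1 ∧
    e ≫ τ.p2 = pullback.snd ρ.p2 σ.p1 ≫ σ.p2

def Rel.IsReflexive (ρ : Rel 𝒞 X X) : Prop :=
  ∃ r : X ⟶ ρ.R, r ≫ ρ.p1 = 𝟙 X ∧ r ≫ ρ.p2 = 𝟙 X

def Rel.IsSymmetric (ρ : Rel 𝒞 X X) : Prop :=
  ∃ s : ρ.R ⟶ ρ.R, s ≫ ρ.p1 = ρ.p2 ∧ s ≫ ρ.p2 = ρ.p1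

def Rel.IsTransitive [HasPullbacks 𝒞] (ρ : Rel 𝒞 X X) : Prop :=
  ∃ t : pullback ρ.p2 ρ.p1 ⟶ ρ.R,
    t ≫ ρ.p1 = pullback.fst ρ.p2 ρ.p1 ≫ ρ.p1 ∧
    t ≫ ρ.p2 = pullback.snd ρ.p2 ρ.p1 ≫ ρ.p2

def Rel.IsEquivalence [HasPullbacks 𝒞] (ρ : Rel 𝒞 X X) : Prop :=
  ρ.IsReflexive ∧ ρ.IsSymmetric ∧ ρ.IsTransitive

/-- A finitely complete category is a Mal'tsev category when every reflexive
relation in it is an equivalence relation. -/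
def IsMaltsev (𝒞 : Type u) [Category.{v} 𝒞] [HasPullbacks 𝒞] : Prop :=
  ∀ {X : 𝒞} (ρ : Rel 𝒞 X X), ρ.IsReflexive → ρ.IsEquivalence

/-- A square of type (1): split epimorphisms `f` (with section `s`) and `g`
(with section `t`), regular epimorphisms `c` and `d`, with `f·c = d·g` and
`s·d = c·t`. -/
structure IsSquare1 {A B E D : 𝒞} (f : A ⟶ B) (s : B ⟶ A) (g : E ⟶ D) (t : D ⟶ E)
    (c : E ⟶ A) (d : D ⟶ B) : Prop where
  sec_f : s ≫ f = 𝟙 B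
  sec_g : t ≫ g = 𝟙 D
  regepi_c : IsRegEpi c
  regepi_d : IsRegEpi d
  comm1 : c ≫ f = g ≫ d
  comm2 : d ≫ s = t ≫ c

/-- `N` is an ideal of morphisms. -/
def IsIdeal (N : MorphismProperty 𝒞) : Prop :=
  ∀ {X Y Z : 𝒞} (f : X ⟶ Y) (g : Y ⟶ Z), N f ∨ N g → N (f ≫ g)

/-- `n` is an `N`-kernel of `f`. -/
def IsNKernel (N : MorphismProperty 𝒞) {X Y K : 𝒞} (f : X ⟶ Y) (n : K ⟶ X) : Prop :=
  N (n ≫ f) ∧ ∀ {Z : 𝒞} (m : Z ⟶ X), N (m ≫ f) → ∃! u : Z ⟶ K, u ≫ n = m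

/-- Every morphism admits an `N`-kernel. -/
def HasNKernels (N : MorphismProperty 𝒞) : Prop :=
  ∀ {X Y : 𝒞} (f : X ⟶ Y), ∃ (K : 𝒞) (n : K ⟶ X), IsNKernel N f n

/-- `τ` is the largest star subrelation `ρ*` of the relation `ρ`. -/
def IsLargestStarSub (N : MorphismProperty 𝒞) (ρ τ : Rel 𝒞 X Y) : Prop :=
  τ.le ρ ∧ N τ.p1 ∧ ∀ σ : Rel 𝒞 X Y, σ.le ρ → N σ.p1 → σ.le τ

/-- `(s1, s2)` is the star-kernel of `f`: the universal star coequalised by `f`. -/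
def IsStarKernel (N : MorphismProperty 𝒞) {S X Y : 𝒞} (f : X ⟶ Y) (s1 s2 : S ⟶ X) : Prop :=
  N s1 ∧ s1 ≫ f = s2 ≫ f ∧
    ∀ {T : 𝒞} (t1 t2 : T ⟶ X), N t1 → t1 ≫ f = t2 ≫ f →
      ∃! u : T ⟶ S, u ≫ s1 = t1 ∧ u ≫ s2 = t2

/-- `(ν1, ν2)` is the star of the pullback relation of `(g, δ)`: the universal
pair with `ν1 ∈ N` and `δ·ν1 = g·ν2`. -/
def IsStarPullbackRel (N : MorphismProperty 𝒞) {W E D P : 𝒞} (δ : W ⟶ D) (g : E ⟶ D)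
    (ν1 : P ⟶ W) (ν2 : P ⟶ E) : Prop :=
  N ν1 ∧ ν1 ≫ δ = ν2 ≫ g ∧
    ∀ {T : 𝒞} (t1 : T ⟶ W) (t2 : T ⟶ E), N t1 → t1 ≫ δ = t2 ≫ g →
      ∃! u : T ⟶ P, u ≫ ν1 = t1 ∧ u ≫ ν2 = t2

/-- `f` is a coequaliser of `(s1, s2)`. -/
def IsCoeqOf {S X Y : 𝒞} (f : X ⟶ Y) (s1 s2 : S ⟶ X) : Prop :=
  s1 ≫ f = s2 ≫ f ∧ ∀ {T : 𝒞} (h : X ⟶ T), s1 ≫ h = s2 ≫ h → ∃! u : Y ⟶ T, f ≫ u = h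

/-- Star-regularity: every regular epimorphism is a coequaliser of a star. -/
def StarRegular (𝒞 : Type u) [Category.{v} 𝒞] (N : MorphismProperty 𝒞) : Prop :=
  ∀ {X Y : 𝒞} (f : X ⟶ Y), IsRegEpi f →
    ∃ (S : 𝒞) (s1 s2 : S ⟶ X), N s1 ∧ IsCoeqOf f s1 s2

/-- `f` is saturating: the induced morphism between the `N`-kernels of the
identities is a regular epimorphism. -/
def Saturating (N : MorphismProperty 𝒞) {X Y : 𝒞} (f : X ⟶ Y) : Prop :=
  ∀ {KX KY : 𝒞} (nX : KX ⟶ X) (nY : KY ⟶ Y), IsNKernel N (𝟙 X) nX → IsNKernel N (𝟙 Y) nY →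
    ∀ u : KX ⟶ KY, u ≫ nY = nX ≫ f → IsRegEpi u

/-- `X` is an `N`-trivial object. -/
def NTrivial (N : MorphismProperty 𝒞) (X : 𝒞) : Prop := N (𝟙 X)

/-- The multi-pointed category has enough trivial objects: `N` is a closed ideal and
`N`-trivial objects are closed under subobjects and squares. -/
def EnoughTrivialObjects [HasBinaryProducts 𝒞] (N : MorphismProperty 𝒞) : Prop :=
  (∀ {X Y : 𝒞} (f : X ⟶ Y), N f → ∃ (T : 𝒞) (p : X ⟶ T) (q : T ⟶ Y),
      NTrivial N T ∧ p ≫ q = f) ∧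
  (∀ {S X : 𝒞} (m : S ⟶ X), Mono m → NTrivial N X → NTrivial N S) ∧
  (∀ X : 𝒞, NTrivial N X → NTrivial N (X ⨯ X))

/-- A square of type (1) is a star-regular pushout when `(c g°)* = f° d*`. -/
def IsStarRegularPushout [HasPullbacks 𝒞] (N : MorphismProperty 𝒞) {A B E D : 𝒞}
    (f : A ⟶ B) (g : E ⟶ D) (c : E ⟶ A) (d : D ⟶ B) : Prop :=
  ∀ (ρ τ μ : Rel 𝒞 D A) (ds : Rel 𝒞 D B),
    IsRelComp (homRel c) (Rel.op (homRel g)) ρ → IsLargestStarSub N ρ τ →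
    IsLargestStarSub N (homRel d) ds → IsRelComp (Rel.op (homRel f)) ds μ →
    τ.equiv μ

/-- 2-star-permutability: `Eq(f) Eq(g)* = Eq(g) Eq(f)*` for all regular
epimorphisms `f`, `g` with the same domain. -/
def TwoStarPermutable (𝒞 : Type u) [Category.{v} 𝒞] [HasPullbacks 𝒞]
    (N : MorphismProperty 𝒞) : Prop :=
  ∀ {X Y Z : 𝒞} (f : X ⟶ Y) (g : X ⟶ Z), IsRegEpi f → IsRegEpi g →
    ∀ (sf sg : Rel 𝒞 X X), IsLargestStarSub N (kerPairRel f) sf →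
      IsLargestStarSub N (kerPairRel g) sg →
    ∀ (τ₁ τ₂ : Rel 𝒞 X X), IsRelComp (kerPairRel f) sg τ₁ →
      IsRelComp (kerPairRel g) sf τ₂ → τ₁.equiv τ₂

section Pointed

variable [HasZeroMorphisms 𝒞]

/-- `k` is a kernel of `f`. -/
def IsKernelOf {K X Y : 𝒞} (k : K ⟶ X) (f : X ⟶ Y) : Prop :=
  k ≫ f = 0 ∧ ∀ {Z : 𝒞} (m : Z ⟶ X), m ≫ f = 0 → ∃! u : Z ⟶ K, u ≫ k = m

/-- `f` is a cokernel of `k`. -/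
def IsCokernelOf {X Y K : 𝒞} (f : X ⟶ Y) (k : K ⟶ X) : Prop :=
  k ≫ f = 0 ∧ ∀ {T : 𝒞} (h : X ⟶ T), k ≫ h = 0 → ∃! u : Y ⟶ T, f ≫ u = h

/-- Short exact sequence `K → X ↠ Y`. -/
def IsShortExact {K X Y : 𝒞} (k : K ⟶ X) (f : X ⟶ Y) : Prop :=
  IsKernelOf k f ∧ IsCokernelOf f k

/-- Subtractivity: every reflexive, left punctual relation is right punctual. -/
def IsSubtractive (𝒞 : Type u) [Category.{v} 𝒞] [HasZeroMorphisms 𝒞] : Prop :=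
  ∀ {X : 𝒞} (ρ : Rel 𝒞 X X), ρ.IsReflexive →
    (∃ l : X ⟶ ρ.R, l ≫ ρ.p1 = 𝟙 X ∧ l ≫ ρ.p2 = 0) →
    (∃ r : X ⟶ ρ.R, r ≫ ρ.p1 = 0 ∧ r ≫ ρ.p2 = 𝟙 X)

end Pointed

/-- The Star-Upper Cuboid Lemma: in any diagram of the form (7) — the three
diamonds being stars of pullback relations of the regular epimorphisms `g`, `f`,
`ḡ` along `δ`, `β`, `δ̄`, and the two middle rows being short star-exact
sequences — if the lower row is a short star-exact sequence then so is the upper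
row. -/
def StarUpperCuboidLemma (𝒞 : Type u) [Category.{v} 𝒞] (N : MorphismProperty 𝒞) : Prop :=
  ∀ {W Y E A D B SW SC S V U P : 𝒞}
    (w : W ⟶ Y) (c : E ⟶ A) (d : D ⟶ B) (g : E ⟶ D) (f : A ⟶ B)
    (δ : W ⟶ D) (β : Y ⟶ B)
    (sw1 sw2 : SW ⟶ W) (sc1 sc2 : SC ⟶ E) (s1 s2 : S ⟶ D)
    (gbar : SC ⟶ S) (δbar : SW ⟶ S)
    (ν1 : V ⟶ W) (ν2 : V ⟶ E) (χ1 : U ⟶ Y) (χ2 : U ⟶ A)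
    (τ1 : P ⟶ SW) (τ2 : P ⟶ SC) (lam : V ⟶ U) (π1 π2 : P ⟶ V),
    -- regular epimorphisms
    IsRegEpi g → IsRegEpi f → IsRegEpi gbar →
    -- commutativity of the two squares
    c ≫ f = g ≫ d → w ≫ β = δ ≫ d →
    -- the star (σ1, σ2) : S ⇉ D
    N s1 →
    -- the two middle rows are short star-exact sequences
    IsStarKernel N w sw1 sw2 → IsCoeqOf w sw1 sw2 →
    IsStarKernel N c sc1 sc2 → IsCoeqOf c sc1 sc2 →
    -- ḡ and δ̄ commute with the stars
    gbar ≫ s1 = sc1 ≫ g → gbar ≫ s2 = sc2 ≫ g →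
    δbar ≫ s1 = sw1 ≫ δ → δbar ≫ s2 = sw2 ≫ δ →
    -- the three diamonds are stars of pullback relations
    IsStarPullbackRel N δ g ν1 ν2 → IsStarPullbackRel N β f χ1 χ2 →
    IsStarPullbackRel N δbar gbar τ1 τ2 →
    -- λ and π = (π1, π2), commuting as in diagram (7)
    lam ≫ χ1 = ν1 ≫ w → lam ≫ χ2 = ν2 ≫ c →
    π1 ≫ ν1 = τ1 ≫ sw1 → π1 ≫ ν2 = τ2 ≫ sc1 →
    π2 ≫ ν1 = τ1 ≫ sw2 → π2 ≫ ν2 = τ2 ≫ sc2 →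
    -- if the lower row is star-exact, then so is the upper row
    (IsStarKernel N d s1 s2 ∧ IsCoeqOf d s1 s2) →
    (IsStarKernel N lam π1 π2 ∧ IsCoeqOf lam π1 π2)

section Infrastructure

lemma factor_coeq {Z P X T : 𝒞} {x y : Z ⟶ X} {ℓ : Z ⟶ P} {p q : P ⟶ X}
    (hx : ℓ ≫ p = x) (hy : ℓ ≫ q = y) {h : X ⟶ T} (hpq : p ≫ h = q ≫ h) :
    x ≫ h = y ≫ h := by
  rw [← hx, ← hy, Category.assoc, Category.assoc, hpq]

lemma IsRegEpi.epi {X Y : 𝒞} {f : X ⟶ Y} (hf : IsRegEpi f) {T : 𝒞} {u v : Y ⟶ T}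
    (h : f ≫ u = f ≫ v) : u = v := by
  obtain ⟨Z, a, b, hab, hUP⟩ := hf
  have hcoe : a ≫ f ≫ u = b ≫ f ≫ u := by
    rw [← Category.assoc, hab, Category.assoc]
  obtain ⟨wit, -, huniq⟩ := hUP (f ≫ u) hcoe
  exact (huniq u rfl).trans (huniq v h.symm).symm

lemma IsCoeqOf.isRegEpi {S X Y : 𝒞} {f : X ⟶ Y} {s1 s2 : S ⟶ X} (h : IsCoeqOf f s1 s2) :
    IsRegEpi f := ⟨S, s1, s2, h.1, h.2⟩

lemma isRegEpi_of_split {A B : 𝒞} (r : A ⟶ B) (s : B ⟶ A) (hs : s ≫ r = 𝟙 B) :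
    IsRegEpi r := by
  refine ⟨A, r ≫ s, 𝟙 A, by rw [Category.assoc, hs, Category.comp_id, Category.id_comp], ?_⟩
  intro T h hh
  refine ⟨s ≫ h, ?_, ?_⟩
  · show r ≫ s ≫ h = h
    rw [← Category.assoc]; simpa using hh
  · intro v hv
    rw [← hv, ← Category.assoc, hs, Category.id_comp]

lemma IsRegEpi.isCoeqOf_kernelPair [HasPullbacks 𝒞] {X Y : 𝒞} {f : X ⟶ Y}
    (hf : IsRegEpi f) : IsCoeqOf f (pullback.fst f f) (pullback.snd f f) := by
  obtain ⟨Z, a, b, hab, hUP⟩ := hf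
  refine ⟨pullback.condition, ?_⟩
  intro T h hh
  exact hUP h (factor_coeq (pullback.lift_fst a b hab) (pullback.lift_snd a b hab) hh)

lemma IsRegEpi.comp [HasPullbacks 𝒞] (hstab : RegEpisStable 𝒞) {X Y Z : 𝒞}
    {f : X ⟶ Y} {g : Y ⟶ Z} (hf : IsRegEpi f) (hg : IsRegEpi g) :
    IsRegEpi (f ≫ g) := by
  have hfc := hf.isCoeqOf_kernelPair
  have hgc := hg.isCoeqOf_kernelPair
  refine ⟨pullback (f ≫ g) (f ≫ g), pullback.fst _ _, pullback.snd _ _,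
    pullback.condition, ?_⟩
  intro T h hh
  -- h coequalises the kernel pair of f
  have h1 : pullback.fst f f ≫ h = pullback.snd f f ≫ h := by
    have hc : pullback.fst f f ≫ f ≫ g = pullback.snd f f ≫ f ≫ g := by
      rw [← Category.assoc, pullback.condition, Category.assoc]
    exact factor_coeq (pullback.lift_fst _ _ hc) (pullback.lift_snd _ _ hc) hh
  obtain ⟨h₁, hh₁, -⟩ := hfc.2 h h1
  -- h₁ coequalises the kernel pair of g
  have h2 : pullback.fst g g ≫ h₁ = pullback.snd g g ≫ h₁ := by
    have ha2 : IsRegEpi (pullback.snd f (pullback.fst g g)) :=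
      hstab _ _ _ _ (IsPullback.of_hasPullback f (pullback.fst g g)).flip hf
    set c₂ : pullback f (pullback.fst g g) ⟶ Y :=
      pullback.snd f (pullback.fst g g) ≫ pullback.snd g g with hc₂
    have hb1 : IsRegEpi (pullback.fst c₂ f) :=
      hstab _ _ _ _ (IsPullback.of_hasPullback c₂ f) hf
    have hcond : (pullback.fst c₂ f ≫ pullback.fst f (pullback.fst g g)) ≫ f ≫ g
        = pullback.snd c₂ f ≫ f ≫ g :=
      calc (pullback.fst c₂ f ≫ pullback.fst f (pullback.fst g g)) ≫ f ≫ g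
          = pullback.fst c₂ f ≫ (pullback.fst f (pullback.fst g g) ≫ f) ≫ g := by
            simp only [Category.assoc]
        _ = pullback.fst c₂ f ≫ (pullback.snd f (pullback.fst g g) ≫ pullback.fst g g) ≫ g := by
            rw [pullback.condition]
        _ = pullback.fst c₂ f ≫ pullback.snd f (pullback.fst g g) ≫ pullback.snd g g ≫ g := by
            simp only [Category.assoc]; rw [pullback.condition]
        _ = (pullback.fst c₂ f ≫ c₂) ≫ g := by simp only [hc₂, Category.assoc]
        _ = (pullback.snd c₂ f ≫ f) ≫ g := by rw [pullback.condition]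
        _ = pullback.snd c₂ f ≫ f ≫ g := by simp only [Category.assoc]
    have hcomp : (pullback.fst c₂ f ≫ pullback.fst f (pullback.fst g g)) ≫ h
        = pullback.snd c₂ f ≫ h :=
      factor_coeq (pullback.lift_fst _ _ hcond) (pullback.lift_snd _ _ hcond) hh
    rw [← hh₁] at hcomp
    have lhs : (pullback.fst c₂ f ≫ pullback.fst f (pullback.fst g g)) ≫ f ≫ h₁
        = (pullback.fst c₂ f ≫ pullback.snd f (pullback.fst g g)) ≫
            pullback.fst g g ≫ h₁ := by
      simp only [Category.assoc]
      rw [← Category.assoc _ f h₁, pullback.condition, Category.assoc]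
    have rhs : pullback.snd c₂ f ≫ f ≫ h₁
        = (pullback.fst c₂ f ≫ pullback.snd f (pullback.fst g g)) ≫
            pullback.snd g g ≫ h₁ := by
      rw [← Category.assoc _ f h₁, ← pullback.condition (f := c₂) (g := f)]
      simp only [hc₂, Category.assoc]
    rw [lhs, rhs] at hcomp
    exact ha2.epi (hb1.epi (by simpa only [Category.assoc] using hcomp))
  obtain ⟨u, hu, -⟩ := hgc.2 h₁ h2
  refine ⟨u, ?_, ?_⟩
  · show (f ≫ g) ≫ u = h
    rw [Category.assoc, hu, hh₁]
  · intro v hv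
    refine hg.epi (hf.epi ?_)
    rw [← Category.assoc, ← Category.assoc, hv, Category.assoc, hu, hh₁]

/-- Regular image factorisation. -/
lemma imageFact [HasPullbacks 𝒞] (hcoeq : KernelPairsHaveCoequalisers 𝒞)
    (hstab : RegEpisStable 𝒞) {X Y : 𝒞} (f : X ⟶ Y) :
    ∃ (I : 𝒞) (e : X ⟶ I) (m : I ⟶ Y), IsRegEpi e ∧ Mono m ∧ e ≫ m = f := by
  obtain ⟨Q, q, hq, hUP⟩ := hcoeq f (pullback.fst f f) (pullback.snd f f)
    (IsPullback.of_hasPullback f f)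
  have hqre : IsRegEpi q := ⟨pullback f f, _, _, hq, hUP⟩
  obtain ⟨m, hm, -⟩ := hUP f pullback.condition
  refine ⟨Q, q, m, hqre, ?_, hm⟩
  have hu1cond : pullback.fst f f ≫ f = (pullback.snd f f ≫ q) ≫ m := by
    rw [Category.assoc, hm]; exact pullback.condition
  set u1 : pullback f f ⟶ pullback f m := pullback.lift _ _ hu1cond with hu1def
  have hbig1 : IsPullback (u1 ≫ pullback.fst f m) (pullback.snd f f) f (q ≫ m) := by
    have e1 : u1 ≫ pullback.fst f m = pullback.fst f f := by
      rw [hu1def]; exact pullback.lift_fst _ _ _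
    rw [e1, hm]
    exact IsPullback.of_hasPullback f f
  have hpb1 : IsPullback u1 (pullback.snd f f) (pullback.snd f m) q :=
    IsPullback.of_right hbig1 (by rw [hu1def]; exact pullback.lift_snd _ _ _) (IsPullback.of_hasPullback f m)
  have hu1re : IsRegEpi u1 := hstab _ _ _ _ hpb1 hqre
  have hu2cond : (pullback.fst f m ≫ q) ≫ m = pullback.snd f m ≫ m := by
    rw [Category.assoc, hm]; exact pullback.condition
  set u2 : pullback f m ⟶ pullback m m := pullback.lift _ _ hu2cond with hu2def
  have hbig2 : IsPullback (u2 ≫ pullback.snd m m) (pullback.fst f m) m (q ≫ m) := by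
    have e1 : u2 ≫ pullback.snd m m = pullback.snd f m := by
      rw [hu2def]; exact pullback.lift_snd _ _ _
    rw [e1, hm]
    exact (IsPullback.of_hasPullback f m).flip
  have hpb2 : IsPullback u2 (pullback.fst f m) (pullback.fst m m) q :=
    IsPullback.of_right hbig2 (by rw [hu2def]; exact pullback.lift_fst _ _ _) (IsPullback.of_hasPullback m m).flip
  have hu2re : IsRegEpi u2 := hstab _ _ _ _ hpb2 hqre
  have hK : pullback.fst m m = pullback.snd m m := by
    refine hu2re.epi (hu1re.epi ?_)
    have hr1 : u1 ≫ u2 ≫ pullback.fst m m = pullback.fst f f ≫ q := by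
      rw [hu2def, pullback.lift_fst, ← Category.assoc, hu1def, pullback.lift_fst]
    have hr2 : u1 ≫ u2 ≫ pullback.snd m m = pullback.snd f f ≫ q := by
      rw [hu2def, pullback.lift_snd, hu1def, pullback.lift_snd]
    rw [hr1, hr2, hq]
  constructor
  intro T α β hαβ
  have e1 : pullback.lift α β hαβ ≫ pullback.fst m m = α := pullback.lift_fst _ _ _
  rw [← e1, hK]; exact pullback.lift_snd _ _ _

/-- If a composite `x ≫ lam` is a regular epi, then so is `lam`. -/
lemma regEpi_of_comp [HasPullbacks 𝒞] (hcoeq : KernelPairsHaveCoequalisers 𝒞)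
    (hstab : RegEpisStable 𝒞) {Q V U : 𝒞} {x : Q ⟶ V} {lam : V ⟶ U}
    (hx : IsRegEpi (x ≫ lam)) : IsRegEpi lam := by
  obtain ⟨I, e, m, he, hmono, hem⟩ := imageFact hcoeq hstab lam
  obtain ⟨Z, a, b, hab, hUP⟩ := id hx
  have hab' : a ≫ x ≫ e = b ≫ x ≫ e := by
    have hc : (a ≫ x ≫ e) ≫ m = (b ≫ x ≫ e) ≫ m := by
      simp only [Category.assoc, hem]
      simpa only [Category.assoc] using hab
    exact (cancel_mono m).mp hc
  obtain ⟨σ, hσ, -⟩ := hUP (x ≫ e) hab'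
  have hσm : σ ≫ m = 𝟙 U := by
    refine hx.epi ?_
    rw [← Category.assoc, hσ, Category.assoc, hem, Category.comp_id]
  have hmσ : m ≫ σ = 𝟙 I := by
    have hc : (m ≫ σ) ≫ m = 𝟙 I ≫ m := by
      rw [Category.assoc, hσm, Category.comp_id, Category.id_comp]
    exact (cancel_mono m).mp hc
  obtain ⟨Z', a', b', h', UP'⟩ := he
  have hco : a' ≫ lam = b' ≫ lam := by
    rw [← hem, ← Category.assoc, ← Category.assoc, h']
  refine ⟨Z', a', b', hco, ?_⟩
  intro T h hh
  obtain ⟨u', hu', huniq'⟩ := UP' h hh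
  refine ⟨σ ≫ u', ?_, ?_⟩
  · show lam ≫ σ ≫ u' = h
    rw [← hem, Category.assoc, ← Category.assoc m σ u', hmσ, Category.id_comp, hu']
  · intro v hv
    have h1 : e ≫ m ≫ v = h := by rw [← Category.assoc, hem, hv]
    have h2 := huniq' (m ≫ v) h1
    calc v = (σ ≫ m) ≫ v := by rw [hσm, Category.id_comp]
      _ = σ ≫ m ≫ v := Category.assoc _ _ _
      _ = σ ≫ u' := by rw [h2]

end Infrastructure

section Infrastructure2

variable {N : MorphismProperty 𝒞}

/-- Diagonal fill-in: a regular epi factors through a jointly-monic pair. -/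
lemma fillIn {A B K X1 X2 : 𝒞} {e : A ⟶ B} (he : IsRegEpi e) {k1 : K ⟶ X1} {k2 : K ⟶ X2}
    (u : A ⟶ K) (v1 : B ⟶ X1) (v2 : B ⟶ X2)
    (jm : ∀ {Z : 𝒞} (a b : Z ⟶ K), a ≫ k1 = b ≫ k1 → a ≫ k2 = b ≫ k2 → a = b)
    (h1 : u ≫ k1 = e ≫ v1) (h2 : u ≫ k2 = e ≫ v2) :
    ∃ w : B ⟶ K, e ≫ w = u ∧ w ≫ k1 = v1 ∧ w ≫ k2 = v2 := by
  obtain ⟨Z, a, b, hab, hUP⟩ := id he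
  have hau : a ≫ u = b ≫ u := by
    refine jm _ _ ?_ ?_
    · rw [Category.assoc, Category.assoc, h1, ← Category.assoc, ← Category.assoc, hab]
    · rw [Category.assoc, Category.assoc, h2, ← Category.assoc, ← Category.assoc, hab]
  obtain ⟨w, hw, -⟩ := hUP u hau
  refine ⟨w, hw, ?_, ?_⟩
  · exact he.epi (by rw [← Category.assoc, hw, h1])
  · exact he.epi (by rw [← Category.assoc, hw, h2])

/-- Image of a span, as a relation. -/
lemma relOfSpan [HasFiniteLimits 𝒞] (hcoeq : KernelPairsHaveCoequalisers 𝒞)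
    (hstab : RegEpisStable 𝒞) {Z X1 X2 : 𝒞} (a : Z ⟶ X1) (b : Z ⟶ X2) :
    ∃ (τ : Rel 𝒞 X1 X2) (e : Z ⟶ τ.R), IsRegEpi e ∧ e ≫ τ.p1 = a ∧ e ≫ τ.p2 = b := by
  obtain ⟨I, e, m, he, hmono, hem⟩ := imageFact hcoeq hstab (prod.lift a b)
  refine ⟨⟨I, m ≫ prod.fst, m ≫ prod.snd, ?_⟩, e, he, ?_, ?_⟩
  · intro W α β hα hβ
    have : α ≫ m = β ≫ m := by
      apply Limits.prod.hom_ext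
      · simpa only [Category.assoc] using hα
      · simpa only [Category.assoc] using hβ
    exact (cancel_mono m).mp this
  · show e ≫ m ≫ prod.fst = a
    rw [← Category.assoc, hem, prod.lift_fst]
  · show e ≫ m ≫ prod.snd = b
    rw [← Category.assoc, hem, prod.lift_snd]

/-- Two `N`-morphisms jointly factor through a trivial object via a cover. -/
lemma trivialCover [HasFiniteLimits 𝒞] (hcoeq : KernelPairsHaveCoequalisers 𝒞)
    (hstab : RegEpisStable 𝒞) (htriv : EnoughTrivialObjects N)
    (hprod : ∀ X Y : 𝒞, NTrivial N X → NTrivial N Y → NTrivial N (X ⨯ Y))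
    {T A B : 𝒞} {x1 : T ⟶ A} {x2 : T ⟶ B} (h1 : N x1) (h2 : N x2) :
    ∃ (S : 𝒞) (e : T ⟶ S) (y1 : S ⟶ A) (y2 : S ⟶ B),
      NTrivial N S ∧ IsRegEpi e ∧ e ≫ y1 = x1 ∧ e ≫ y2 = x2 := by
  obtain ⟨T1, p1, q1, htr1, hpq1⟩ := htriv.1 x1 h1
  obtain ⟨T2, p2, q2, htr2, hpq2⟩ := htriv.1 x2 h2
  obtain ⟨S, e, m, he, hmono, hem⟩ := imageFact hcoeq hstab (prod.lift p1 p2)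
  haveI := hmono
  refine ⟨S, e, m ≫ prod.fst ≫ q1, m ≫ prod.snd ≫ q2,
    htriv.2.1 m hmono (hprod _ _ htr1 htr2), he, ?_, ?_⟩
  · have step : e ≫ m ≫ prod.fst ≫ q1 = ((e ≫ m) ≫ prod.fst) ≫ q1 := by
      simp only [Category.assoc]
    rw [step, hem, prod.lift_fst, hpq1]
  · have step : e ≫ m ≫ prod.snd ≫ q2 = ((e ≫ m) ≫ prod.snd) ≫ q2 := by
      simp only [Category.assoc]
    rw [step, hem, prod.lift_snd, hpq2]

/-- A morphism both of whose components along a jointly-monic pair lie in `N`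
is itself in `N`, provided suitable lifts exist from trivial objects. -/
lemma N_of_components [HasFiniteLimits 𝒞] (hcoeq : KernelPairsHaveCoequalisers 𝒞)
    (hstab : RegEpisStable 𝒞) (hN : IsIdeal N) (htriv : EnoughTrivialObjects N)
    (hprod : ∀ X Y : 𝒞, NTrivial N X → NTrivial N Y → NTrivial N (X ⨯ Y))
    {T K A B : 𝒞} {k1 : K ⟶ A} {k2 : K ⟶ B} {α : T ⟶ K}
    (jm : ∀ {Z : 𝒞} (a b : Z ⟶ K), a ≫ k1 = b ≫ k1 → a ≫ k2 = b ≫ k2 → a = b)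
    (h1 : N (α ≫ k1)) (h2 : N (α ≫ k2))
    (lift : ∀ (S : 𝒞) (e : T ⟶ S) (y1 : S ⟶ A) (y2 : S ⟶ B), NTrivial N S →
      IsRegEpi e → e ≫ y1 = α ≫ k1 → e ≫ y2 = α ≫ k2 →
      ∃ α' : S ⟶ K, α' ≫ k1 = y1 ∧ α' ≫ k2 = y2) : N α := by
  obtain ⟨S, e, y1, y2, htrS, he, hy1, hy2⟩ := trivialCover hcoeq hstab htriv hprod h1 h2
  obtain ⟨α', hα'1, hα'2⟩ := lift S e y1 y2 htrS he hy1 hy2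
  have heα : e ≫ α' = α := by
    refine jm _ _ ?_ ?_
    · rw [Category.assoc, hα'1, hy1]
    · rw [Category.assoc, hα'2, hy2]
  have hNα' : N α' := by
    have := hN (𝟙 S) α' (Or.inl htrS)
    rwa [Category.id_comp] at this
  rw [← heα]
  exact hN e α' (Or.inr hNα')

/-- Saturation: an `N`-morphism lifts along a regular epi after passing to a cover. -/
lemma saturationLift [HasFiniteLimits 𝒞] (hstab : RegEpisStable 𝒞) (hN : IsIdeal N)
    (hker : HasNKernels N) (htriv : EnoughTrivialObjects N)
    (hsat : ∀ {X Y : 𝒞} (f : X ⟶ Y), IsRegEpi f → Saturating N f)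
    {T Y W : 𝒞} (h : T ⟶ Y) (hh : N h) (w : W ⟶ Y) (hw : IsRegEpi w) :
    ∃ (T' : 𝒞) (e : T' ⟶ T) (x : T' ⟶ W), IsRegEpi e ∧ N x ∧ x ≫ w = e ≫ h := by
  obtain ⟨Θ, p, q, htrΘ, hpq⟩ := htriv.1 h hh
  obtain ⟨KY, nY, hnY⟩ := hker (𝟙 Y)
  obtain ⟨KW, nW, hnW⟩ := hker (𝟙 W)
  have hNq : N q := by
    have := hN (𝟙 Θ) q (Or.inl htrΘ)
    rwa [Category.id_comp] at this
  obtain ⟨q', hq', -⟩ := hnY.2 q (by rwa [Category.comp_id])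
  have hNnW : N nW := by
    have := hnW.1
    rwa [Category.comp_id] at this
  obtain ⟨u, hu, -⟩ := hnY.2 (nW ≫ w) (by rw [Category.comp_id]; exact hN nW w (Or.inl hNnW))
  have hure : IsRegEpi u := hsat w hw nW nY hnW hnY u hu
  refine ⟨pullback (p ≫ q') u, pullback.fst _ _, pullback.snd _ _ ≫ nW,
    hstab _ _ _ _ (IsPullback.of_hasPullback (p ≫ q') u) hure,
    hN _ nW (Or.inr hNnW), ?_⟩
  rw [Category.assoc, ← hu, ← Category.assoc, ← pullback.condition, Category.assoc,
    Category.assoc, hq', hpq]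

/-- Star kernels exist. -/
lemma starKernelExists [HasPullbacks 𝒞] (hker : HasNKernels N) {X Y : 𝒞} (f : X ⟶ Y) :
    ∃ (S : 𝒞) (s1 s2 : S ⟶ X), IsStarKernel N f s1 s2 := by
  obtain ⟨K, n, hn⟩ := hker (pullback.fst f f)
  refine ⟨K, n ≫ pullback.fst f f, n ≫ pullback.snd f f, hn.1, ?_, ?_⟩
  · rw [Category.assoc, Category.assoc, pullback.condition]
  · intro T t1 t2 ht1 ht
    obtain ⟨v, hv, hvu⟩ := hn.2 (pullback.lift t1 t2 ht) (by rwa [pullback.lift_fst])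
    refine ⟨v, ⟨?_, ?_⟩, ?_⟩
    · show v ≫ n ≫ pullback.fst f f = t1
      rw [← Category.assoc, hv, pullback.lift_fst]
    · show v ≫ n ≫ pullback.snd f f = t2
      rw [← Category.assoc, hv, pullback.lift_snd]
    · rintro v' ⟨hv'1, hv'2⟩
      refine hvu v' (pullback.hom_ext ?_ ?_)
      · simpa only [Category.assoc, pullback.lift_fst] using hv'1
      · simpa only [Category.assoc, pullback.lift_snd] using hv'2

/-- Stars of pullback relations exist. -/
lemma starPullbackExists [HasPullbacks 𝒞] (hker : HasNKernels N) {W E D : 𝒞}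
    (δ : W ⟶ D) (g : E ⟶ D) :
    ∃ (P : 𝒞) (ν1 : P ⟶ W) (ν2 : P ⟶ E), IsStarPullbackRel N δ g ν1 ν2 := by
  obtain ⟨K, n, hn⟩ := hker (pullback.fst δ g)
  refine ⟨K, n ≫ pullback.fst δ g, n ≫ pullback.snd δ g, hn.1, ?_, ?_⟩
  · rw [Category.assoc, Category.assoc, pullback.condition]
  · intro T t1 t2 ht1 ht
    obtain ⟨v, hv, hvu⟩ := hn.2 (pullback.lift t1 t2 ht) (by rwa [pullback.lift_fst])
    refine ⟨v, ⟨?_, ?_⟩, ?_⟩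
    · show v ≫ n ≫ pullback.fst δ g = t1
      rw [← Category.assoc, hv, pullback.lift_fst]
    · show v ≫ n ≫ pullback.snd δ g = t2
      rw [← Category.assoc, hv, pullback.lift_snd]
    · rintro v' ⟨hv'1, hv'2⟩
      refine hvu v' (pullback.hom_ext ?_ ?_)
      · simpa only [Category.assoc, pullback.lift_fst] using hv'1
      · simpa only [Category.assoc, pullback.lift_snd] using hv'2

lemma IsStarKernel.jm (hN : IsIdeal N) {S X Y : 𝒞} {f : X ⟶ Y} {s1 s2 : S ⟶ X}
    (h : IsStarKernel N f s1 s2) :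
    ∀ {Z : 𝒞} (a b : Z ⟶ S), a ≫ s1 = b ≫ s1 → a ≫ s2 = b ≫ s2 → a = b := by
  intro Z a b h1 h2
  have hN1 : N (a ≫ s1) := hN a s1 (Or.inr h.1)
  have hco : (a ≫ s1) ≫ f = (a ≫ s2) ≫ f := by
    rw [Category.assoc, Category.assoc, h.2.1]
  obtain ⟨u, -, huniq⟩ := h.2.2 (a ≫ s1) (a ≫ s2) hN1 hco
  have ha := huniq a ⟨rfl, rfl⟩
  have hb := huniq b ⟨h1.symm, h2.symm⟩
  rw [ha, hb]

lemma IsStarPullbackRel.jm (hN : IsIdeal N) {W E D P : 𝒞} {δ : W ⟶ D} {g : E ⟶ D}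
    {ν1 : P ⟶ W} {ν2 : P ⟶ E} (h : IsStarPullbackRel N δ g ν1 ν2) :
    ∀ {Z : 𝒞} (a b : Z ⟶ P), a ≫ ν1 = b ≫ ν1 → a ≫ ν2 = b ≫ ν2 → a = b := by
  intro Z a b h1 h2
  have hN1 : N (a ≫ ν1) := hN a ν1 (Or.inr h.1)
  have hco : (a ≫ ν1) ≫ δ = (a ≫ ν2) ≫ g := by
    rw [Category.assoc, Category.assoc, h.2.1]
  obtain ⟨u, -, huniq⟩ := h.2.2 (a ≫ ν1) (a ≫ ν2) hN1 hco
  have ha := huniq a ⟨rfl, rfl⟩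
  have hb := huniq b ⟨h1.symm, h2.symm⟩
  rw [ha, hb]

/-- In a star-regular category a regular epi is the coequaliser of any star kernel. -/
lemma coeqOf_starKernel (hsr : StarRegular 𝒞 N) {X Y : 𝒞} {f : X ⟶ Y}
    (hf : IsRegEpi f) {S : 𝒞} {s1 s2 : S ⟶ X} (hs : IsStarKernel N f s1 s2) :
    IsCoeqOf f s1 s2 := by
  obtain ⟨S', t1, t2, hNt1, hco⟩ := hsr f hf
  obtain ⟨φ, ⟨hφ1, hφ2⟩, -⟩ := hs.2.2 t1 t2 hNt1 hco.1
  refine ⟨hs.2.1, ?_⟩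
  intro T h hh
  refine hco.2 h ?_
  rw [← hφ1, ← hφ2, Category.assoc, Category.assoc, hh]

/-- A star kernel of `f` is the largest star subrelation of the kernel pair of `f`. -/
lemma starKernel_isLargestStarSub [HasPullbacks 𝒞] (hN : IsIdeal N) {S X Y : 𝒞} {f : X ⟶ Y}
    {s1 s2 : S ⟶ X} (hs : IsStarKernel N f s1 s2) :
    IsLargestStarSub N (kerPairRel f) ⟨S, s1, s2, hs.jm hN⟩ := by
  refine ⟨⟨pullback.lift s1 s2 hs.2.1, pullback.lift_fst _ _ _, pullback.lift_snd _ _ _⟩,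
    hs.1, ?_⟩
  intro σ ⟨j, hj1, hj2⟩ hNσ
  have hco : σ.p1 ≫ f = σ.p2 ≫ f := by
    rw [← hj1, ← hj2, Category.assoc, Category.assoc]
    show j ≫ pullback.fst f f ≫ f = j ≫ pullback.snd f f ≫ f
    exact congrArg (j ≫ ·) (pullback.condition (f := f) (g := f))
  obtain ⟨u, ⟨hu1, hu2⟩, -⟩ := hs.2.2 σ.p1 σ.p2 hNσ hco
  exact ⟨u, hu1, hu2⟩

end Infrastructure2

section Forward

variable {N : MorphismProperty 𝒞}

lemma kerPairRel_p1 [HasPullbacks 𝒞] {X Y : 𝒞} (f : X ⟶ Y) :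
    (kerPairRel f).p1 = pullback.fst f f := rfl

lemma kerPairRel_p2 [HasPullbacks 𝒞] {X Y : 𝒞} (f : X ⟶ Y) :
    (kerPairRel f).p2 = pullback.snd f f := rfl

lemma forward_direction [HasFiniteLimits 𝒞]
    (hcoeq : KernelPairsHaveCoequalisers 𝒞) (hstab : RegEpisStable 𝒞)
    (hN : IsIdeal N) (hker : HasNKernels N) (hsr : StarRegular 𝒞 N)
    (hsat : ∀ {X Y : 𝒞} (f : X ⟶ Y), IsRegEpi f → Saturating N f)
    (htriv : EnoughTrivialObjects N)
    (hprod : ∀ X Y : 𝒞, NTrivial N X → NTrivial N Y → NTrivial N (X ⨯ Y))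
    (tsp : TwoStarPermutable 𝒞 N) : StarUpperCuboidLemma 𝒞 N := by
  intro W Y E A D B SW SC S V U P w c d g f δ β sw1 sw2 sc1 sc2 s1 s2 gbar δbar
    ν1 ν2 χ1 χ2 τ1 τ2 lam π1 π2 hg hf hgbar hcf hwβ hNs1 hSKw hCw hSKc hCc
    hgb1 hgb2 hdb1 hdb2 hV hU hP hl1 hl2 hp11 hp12 hp21 hp22 hlow
  obtain ⟨hSKd, hCd⟩ := hlow
  have hwre : IsRegEpi w := hCw.isRegEpi
  have hcre : IsRegEpi c := hCc.isRegEpi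
  have hdre : IsRegEpi d := hCd.isRegEpi
  have jmν : ∀ {Z : 𝒞} (a b : Z ⟶ V), a ≫ ν1 = b ≫ ν1 → a ≫ ν2 = b ≫ ν2 → a = b :=
    hV.jm hN
  have jmχ : ∀ {Z : 𝒞} (a b : Z ⟶ U), a ≫ χ1 = b ≫ χ1 → a ≫ χ2 = b ≫ χ2 → a = b :=
    hU.jm hN
  have jmτ : ∀ {Z : 𝒞} (a b : Z ⟶ P), a ≫ τ1 = b ≫ τ1 → a ≫ τ2 = b ≫ τ2 → a = b :=
    hP.jm hN
  have jmsw : ∀ {Z : 𝒞} (a b : Z ⟶ SW), a ≫ sw1 = b ≫ sw1 → a ≫ sw2 = b ≫ sw2 → a = b :=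
    hSKw.jm hN
  have jmsc : ∀ {Z : 𝒞} (a b : Z ⟶ SC), a ≫ sc1 = b ≫ sc1 → a ≫ sc2 = b ≫ sc2 → a = b :=
    hSKc.jm hN
  have jms : ∀ {Z : 𝒞} (a b : Z ⟶ S), a ≫ s1 = b ≫ s1 → a ≫ s2 = b ≫ s2 → a = b :=
    hSKd.jm hN
  -- π1 ≫ lam = π2 ≫ lam
  have hππ : π1 ≫ lam = π2 ≫ lam := by
    refine jmχ _ _ ?_ ?_
    · simp only [Category.assoc, hl1, reassoc_of% hp11, reassoc_of% hp21, hSKw.2.1]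
    · simp only [Category.assoc, hl2, reassoc_of% hp12, reassoc_of% hp22, hSKc.2.1]
  -- N π1
  have hNπ1 : N π1 := by
    refine N_of_components hcoeq hstab hN htriv hprod jmν ?_ ?_ ?_
    · rw [hp11]; exact hN _ _ (Or.inr hSKw.1)
    · rw [hp12]; exact hN _ _ (Or.inr hSKc.1)
    · intro S' e y1 y2 htrS he hy1 hy2
      have hy1N : N y1 := by
        have := hN (𝟙 S') y1 (Or.inl htrS); rwa [Category.id_comp] at this
      have hcond : y1 ≫ δ = y2 ≫ g := by
        refine he.epi ?_
        rw [← Category.assoc, ← Category.assoc, hy1, hy2, Category.assoc,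
          Category.assoc, hV.2.1]
      obtain ⟨α', ⟨hα'1, hα'2⟩, -⟩ := hV.2.2 y1 y2 hy1N hcond
      exact ⟨α', hα'1, hα'2⟩
  -- the star kernel property
  have hSKlam : IsStarKernel N lam π1 π2 := by
    refine ⟨hNπ1, hππ, ?_⟩
    intro T t1 t2 hNt1 hco
    have hxw : (t1 ≫ ν1) ≫ w = (t2 ≫ ν1) ≫ w := by
      simp only [Category.assoc, ← hl1]
      rw [← Category.assoc, ← Category.assoc, hco]
    obtain ⟨α, ⟨hα1, hα2⟩, -⟩ := hSKw.2.2 (t1 ≫ ν1) (t2 ≫ ν1)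
      (hN t1 ν1 (Or.inl hNt1)) hxw
    have hec : (t1 ≫ ν2) ≫ c = (t2 ≫ ν2) ≫ c := by
      simp only [Category.assoc, ← hl2]
      rw [← Category.assoc, ← Category.assoc, hco]
    obtain ⟨γ, ⟨hγ1, hγ2⟩, -⟩ := hSKc.2.2 (t1 ≫ ν2) (t2 ≫ ν2)
      (hN t1 ν2 (Or.inl hNt1)) hec
    have hαδ : α ≫ δbar = γ ≫ gbar := by
      refine jms _ _ ?_ ?_
      · simp only [Category.assoc, hdb1, hgb1]
        rw [← Category.assoc, ← Category.assoc, hα1, hγ1, Category.assoc,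
          Category.assoc, hV.2.1]
      · simp only [Category.assoc, hdb2, hgb2]
        rw [← Category.assoc, ← Category.assoc, hα2, hγ2, Category.assoc,
          Category.assoc, hV.2.1]
    have hNα : N α := by
      refine N_of_components hcoeq hstab hN htriv hprod jmsw ?_ ?_ ?_
      · rw [hα1]; exact hN t1 ν1 (Or.inl hNt1)
      · rw [hα2]; exact hN t2 ν1 (Or.inr hV.1)
      · intro S' e y1 y2 htrS he hy1 hy2
        have hy1N : N y1 := by
          have := hN (𝟙 S') y1 (Or.inl htrS); rwa [Category.id_comp] at this
        have hcond : y1 ≫ w = y2 ≫ w := by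
          refine he.epi ?_
          rw [← Category.assoc, ← Category.assoc, hy1, hy2, Category.assoc,
            Category.assoc, hSKw.2.1]
        obtain ⟨α'', ⟨h1', h2'⟩, -⟩ := hSKw.2.2 y1 y2 hy1N hcond
        exact ⟨α'', h1', h2'⟩
    obtain ⟨u, ⟨hu1, hu2⟩, -⟩ := hP.2.2 α γ hNα hαδ
    have huπ1 : u ≫ π1 = t1 := by
      refine jmν _ _ ?_ ?_
      · simp only [Category.assoc, hp11]
        rw [← Category.assoc, hu1, hα1]
      · simp only [Category.assoc, hp12]
        rw [← Category.assoc, hu2, hγ1]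
    have huπ2 : u ≫ π2 = t2 := by
      refine jmν _ _ ?_ ?_
      · simp only [Category.assoc, hp21]
        rw [← Category.assoc, hu1, hα2]
      · simp only [Category.assoc, hp22]
        rw [← Category.assoc, hu2, hγ2]
    refine ⟨u, ⟨huπ1, huπ2⟩, ?_⟩
    rintro u' ⟨hu'1, hu'2⟩
    refine jmτ _ _ ?_ ?_
    · rw [hu1]
      refine jmsw _ _ ?_ ?_
      · simp only [Category.assoc, ← hp11]
        rw [← Category.assoc, hu'1, hα1]
      · simp only [Category.assoc, ← hp21]
        rw [← Category.assoc, hu'2, hα2]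
    · rw [hu2]
      refine jmsc _ _ ?_ ?_
      · simp only [Category.assoc, ← hp12]
        rw [← Category.assoc, hu'1, hγ1]
      · simp only [Category.assoc, ← hp22]
        rw [← Category.assoc, hu'2, hγ2]
  -- lam is a regular epimorphism
  have hlamre : IsRegEpi lam := by
    -- instantiate 2-star-permutability at (c, g)
    obtain ⟨SG, sg1, sg2, hSKg⟩ := starKernelExists (N := N) hker g
    set sfC : Rel 𝒞 E E := ⟨SC, sc1, sc2, hSKc.jm hN⟩ with hsfC
    set sgC : Rel 𝒞 E E := ⟨SG, sg1, sg2, hSKg.jm hN⟩ with hsgC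
    have hLf : IsLargestStarSub N (kerPairRel c) sfC := starKernel_isLargestStarSub hN hSKc
    have hLg : IsLargestStarSub N (kerPairRel g) sgC := starKernel_isLargestStarSub hN hSKg
    obtain ⟨τ1C, e1C, he1C, he1Cp1, he1Cp2⟩ := relOfSpan hcoeq hstab
      (pullback.fst sgC.p2 (kerPairRel c).p1 ≫ sgC.p1)
      (pullback.snd sgC.p2 (kerPairRel c).p1 ≫ (kerPairRel c).p2)
    obtain ⟨τ2C, e2C, he2C, he2Cp1, he2Cp2⟩ := relOfSpan hcoeq hstab
      (pullback.fst sfC.p2 (kerPairRel g).p1 ≫ sfC.p1)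
      (pullback.snd sfC.p2 (kerPairRel g).p1 ≫ (kerPairRel g).p2)
    have hperm := tsp c g hcre hg sfC sgC hLf hLg τ1C τ2C
      ⟨e1C, he1C, he1Cp1, he1Cp2⟩ ⟨e2C, he2C, he2Cp1, he2Cp2⟩
    obtain ⟨j, hj1, hj2⟩ := hperm.2
    -- the covering chase
    have hq1re : IsRegEpi (pullback.fst χ2 c) :=
      hstab _ _ _ _ (IsPullback.of_hasPullback χ2 c) hcre
    set q1 := pullback.fst χ2 c with hq1
    set eh := pullback.snd χ2 c with heh
    have hQ1 : q1 ≫ χ2 = eh ≫ c := pullback.condition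
    obtain ⟨Q2, t2', xh, ht2re, hNxh, hxhw⟩ := saturationLift hstab hN hker htriv hsat
      (q1 ≫ χ1) (hN q1 χ1 (Or.inr hU.1)) w hwre
    have hσcond : (xh ≫ δ) ≫ d = ((t2' ≫ eh) ≫ g) ≫ d := by
      have l1 : (xh ≫ δ) ≫ d = xh ≫ w ≫ β := by
        rw [Category.assoc, ← hwβ]
      have l2 : xh ≫ w ≫ β = t2' ≫ q1 ≫ χ1 ≫ β := by
        rw [← Category.assoc, hxhw]; simp only [Category.assoc]
      have l3 : t2' ≫ q1 ≫ χ1 ≫ β = t2' ≫ q1 ≫ χ2 ≫ f := by rw [hU.2.1]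
      have l4 : t2' ≫ q1 ≫ χ2 ≫ f = t2' ≫ eh ≫ c ≫ f := by
        rw [← Category.assoc q1 χ2 f, hQ1]; simp only [Category.assoc]
      have l5 : t2' ≫ eh ≫ c ≫ f = ((t2' ≫ eh) ≫ g) ≫ d := by
        rw [hcf]; simp only [Category.assoc]
      rw [l1, l2, l3, l4, l5]
    obtain ⟨σ, ⟨hσ1, hσ2⟩, -⟩ := hSKd.2.2 (xh ≫ δ) ((t2' ≫ eh) ≫ g)
      (hN xh δ (Or.inl hNxh)) hσcond
    have hq3re : IsRegEpi (pullback.fst σ gbar) :=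
      hstab _ _ _ _ (IsPullback.of_hasPullback σ gbar) hgbar
    set q3 := pullback.fst σ gbar with hq3
    set ψ := pullback.snd σ gbar with hψ
    have hQ3 : q3 ≫ σ = ψ ≫ gbar := pullback.condition
    have hψ1 : ψ ≫ sc1 ≫ g = q3 ≫ xh ≫ δ := by
      rw [← hgb1, ← Category.assoc, ← hQ3, Category.assoc, hσ1]
    have hψ2 : ψ ≫ sc2 ≫ g = q3 ≫ t2' ≫ eh ≫ g := by
      rw [← hgb2, ← Category.assoc, ← hQ3, Category.assoc, hσ2]
      simp only [Category.assoc]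
    have hℓg : (ψ ≫ sc2) ≫ g = (q3 ≫ t2' ≫ eh) ≫ g := by
      simpa only [Category.assoc] using hψ2
    set ℓg : _ ⟶ pullback g g := pullback.lift (ψ ≫ sc2) (q3 ≫ t2' ≫ eh) hℓg with hℓgdef
    have hpb2cond : ψ ≫ sfC.p2 = ℓg ≫ (kerPairRel g).p1 := by
      show ψ ≫ sc2 = ℓg ≫ pullback.fst g g
      rw [hℓgdef, pullback.lift_fst]
    set pb2el := pullback.lift ψ ℓg hpb2cond with hpb2el
    have h3p1 : (pb2el ≫ e2C) ≫ τ2C.p1 = ψ ≫ sc1 := by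
      erw [Category.assoc, he2Cp1, ← Category.assoc, hpb2el, pullback.lift_fst]
    have h3p2 : (pb2el ≫ e2C) ≫ τ2C.p2 = q3 ≫ t2' ≫ eh := by
      erw [Category.assoc, he2Cp2, ← Category.assoc, hpb2el, pullback.lift_snd]
      show ℓg ≫ pullback.snd g g = _
      rw [hℓgdef, pullback.lift_snd]
    set h4 := pb2el ≫ e2C ≫ j with hh4
    have h4p1 : h4 ≫ τ1C.p1 = ψ ≫ sc1 := by
      erw [hh4, Category.assoc, Category.assoc, hj1, ← Category.assoc, h3p1]
    have h4p2 : h4 ≫ τ1C.p2 = q3 ≫ t2' ≫ eh := by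
      erw [hh4, Category.assoc, Category.assoc, hj2, ← Category.assoc, h3p2]
    have hq4re : IsRegEpi (pullback.fst h4 e1C) :=
      hstab _ _ _ _ (IsPullback.of_hasPullback h4 e1C) he1C
    set q4 := pullback.fst h4 e1C with hq4
    set k4 := pullback.snd h4 e1C with hk4
    have hQ4 : q4 ≫ h4 = k4 ≫ e1C := pullback.condition
    set pf1 := pullback.fst sgC.p2 (kerPairRel c).p1 with hpf1
    set ps1 := pullback.snd sgC.p2 (kerPairRel c).p1 with hps1
    have hPB1 : pf1 ≫ sgC.p2 = ps1 ≫ (kerPairRel c).p1 := pullback.condition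
    set θ := k4 ≫ pf1 with hθ
    have hθ1 : θ ≫ sg1 = q4 ≫ ψ ≫ sc1 := by
      have e1 : θ ≫ sgC.p1 = k4 ≫ e1C ≫ τ1C.p1 := by
        rw [hθ, Category.assoc, he1Cp1]
      have e2 : k4 ≫ e1C ≫ τ1C.p1 = q4 ≫ h4 ≫ τ1C.p1 := by
        rw [← Category.assoc, ← hQ4, Category.assoc]
      show θ ≫ sgC.p1 = _
      rw [e1, e2, h4p1]
    set m' := θ ≫ sg2 with hm'
    have hm'c : m' ≫ c = q4 ≫ q3 ≫ t2' ≫ eh ≫ c := by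
      have e0 : m' = k4 ≫ ps1 ≫ pullback.fst c c := by
        show θ ≫ sgC.p2 = _
        rw [hθ, Category.assoc, hPB1]
        rfl
      have e1 : m' ≫ c = (k4 ≫ ps1 ≫ pullback.snd c c) ≫ c := by
        rw [e0]
        simp only [Category.assoc]
        exact congrArg (k4 ≫ ·) ((Category.assoc ps1 (pullback.fst c c) c).trans
          ((congrArg (ps1 ≫ ·) (pullback.condition (f := c) (g := c))).trans
            (Category.assoc ps1 (pullback.snd c c) c).symm))
      have e2 : k4 ≫ ps1 ≫ pullback.snd c c = q4 ≫ h4 ≫ τ1C.p2 := by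
        have : ps1 ≫ pullback.snd c c = e1C ≫ τ1C.p2 := by
          rw [he1Cp2]; rfl
        rw [this, ← Category.assoc, ← hQ4, Category.assoc]
      rw [e1, e2, h4p2]
      simp only [Category.assoc]
    have hm'g : m' ≫ g = q4 ≫ q3 ≫ xh ≫ δ := by
      have e1 : m' ≫ g = (θ ≫ sg1) ≫ g := by
        rw [hm', Category.assoc, ← hSKg.2.1, ← Category.assoc]
      rw [e1, hθ1]
      simp only [Category.assoc]
      rw [hψ1]
    obtain ⟨ζ, ⟨hζ1, hζ2⟩, -⟩ := hV.2.2 (q4 ≫ q3 ≫ xh) m'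
      (hN q4 (q3 ≫ xh) (Or.inr (hN q3 xh (Or.inr hNxh))))
      (by simp only [Category.assoc]; exact hm'g.symm)
    have hρre : IsRegEpi (q4 ≫ q3 ≫ t2' ≫ q1) :=
      IsRegEpi.comp hstab hq4re (IsRegEpi.comp hstab hq3re
        (IsRegEpi.comp hstab ht2re hq1re))
    have hζlam : ζ ≫ lam = q4 ≫ q3 ≫ t2' ≫ q1 := by
      refine jmχ _ _ ?_ ?_
      · simp only [Category.assoc, hl1]
        rw [← Category.assoc, hζ1]
        simp only [Category.assoc]
        rw [hxhw]
      · simp only [Category.assoc, hl2]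
        rw [← Category.assoc, hζ2, hm'c, hQ1]
    refine regEpi_of_comp hcoeq hstab (x := ζ) ?_
    rw [hζlam]
    exact hρre
  exact ⟨hSKlam, coeqOf_starKernel hsr hlamre hSKlam⟩

end Forward

section Backward

variable {N : MorphismProperty 𝒞}

/-- The key inclusion extracted from the Star-Upper Cuboid Lemma. -/
lemma cuboid_incl [HasFiniteLimits 𝒞]
    (hcoeq : KernelPairsHaveCoequalisers 𝒞) (hstab : RegEpisStable 𝒞)
    (hN : IsIdeal N) (hker : HasNKernels N) (hsr : StarRegular 𝒞 N)
    (htriv : EnoughTrivialObjects N)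
    (hprod : ∀ X Y : 𝒞, NTrivial N X → NTrivial N Y → NTrivial N (X ⨯ Y))
    (hcub : StarUpperCuboidLemma 𝒞 N)
    {X Y Z : 𝒞} (φ : X ⟶ Y) (ψ : X ⟶ Z) (hφ : IsRegEpi φ) (hψ : IsRegEpi ψ)
    (sφ sψ : Rel 𝒞 X X)
    (hLφ : IsLargestStarSub N (kerPairRel φ) sφ)
    (hLψ : IsLargestStarSub N (kerPairRel ψ) sψ)
    (τa τb : Rel 𝒞 X X)
    (hτa : IsRelComp (kerPairRel φ) sψ τa)
    (hτb : IsRelComp (kerPairRel ψ) sφ τb) : τa.le τb := by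
  classical
  -- image R_ψ of the kernel pair of φ under ψ
  obtain ⟨Rψ, e', he', he'1, he'2⟩ := relOfSpan hcoeq hstab ((pullback.fst φ φ) ≫ ψ) ((pullback.snd φ φ) ≫ ψ)
  -- the first projection of R_ψ is split epi
  have hdX : (𝟙 X) ≫ φ = (𝟙 X) ≫ φ := rfl
  set dX : X ⟶ pullback φ φ := pullback.lift (𝟙 X) (𝟙 X) hdX with hdXdef
  have hdXe'p1 : dX ≫ e' ≫ Rψ.p1 = ψ := by
    rw [he'1, ← Category.assoc, hdXdef, pullback.lift_fst, Category.id_comp]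
  have hdXe'p2 : dX ≫ e' ≫ Rψ.p2 = ψ := by
    rw [he'2, ← Category.assoc, hdXdef, pullback.lift_snd, Category.id_comp]
  have hdesc : pullback.fst ψ ψ ≫ dX ≫ e' = pullback.snd ψ ψ ≫ dX ≫ e' := by
    refine Rψ.jm _ _ ?_ ?_
    · simp only [Category.assoc, hdXe'p1]
      exact pullback.condition
    · simp only [Category.assoc, hdXe'p2]
      exact pullback.condition
  obtain ⟨s, hs, -⟩ := hψ.isCoeqOf_kernelPair.2 (dX ≫ e') hdesc
  have hsp1 : s ≫ Rψ.p1 = 𝟙 Z := by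
    refine hψ.epi ?_
    rw [← Category.assoc, hs]
    simpa only [Category.assoc, Category.comp_id] using hdXe'p1
  have hfre : IsRegEpi Rψ.p1 := isRegEpi_of_split _ s hsp1
  have hgcre : IsRegEpi (pullback.fst φ φ) := hstab _ _ _ _ (IsPullback.of_hasPullback φ φ) hφ
  -- star kernels
  obtain ⟨Sψ, σ1, σ2, hSKψ⟩ := starKernelExists (N := N) hker ψ
  have hCψ := coeqOf_starKernel hsr hψ hSKψ
  obtain ⟨SCo, sc1, sc2, hSKe'⟩ := starKernelExists (N := N) hker e'
  have hCe' := coeqOf_starKernel hsr he' hSKe'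
  obtain ⟨KX, nX, hnX⟩ := hker (𝟙 X)
  have hNnX : N nX := by have := hnX.1; rwa [Category.comp_id] at this
  have hSK1 : IsStarKernel N (𝟙 X) nX nX := by
    refine ⟨hNnX, rfl, ?_⟩
    intro T t1 t2 hNt1 h12
    have ht : t1 = t2 := by simpa using h12
    obtain ⟨u, hu, huniq⟩ := hnX.2 t1 (by rwa [Category.comp_id])
    exact ⟨u, ⟨hu, ht ▸ hu⟩, fun v hv => huniq v hv.1⟩
  have hC1 : IsCoeqOf (𝟙 X) nX nX := by
    refine ⟨rfl, ?_⟩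
    intro T h _
    exact ⟨h, Category.id_comp h, fun v hv => by rw [← hv, Category.id_comp]⟩
  have jmσ : ∀ {T : 𝒞} (a b : T ⟶ Sψ), a ≫ σ1 = b ≫ σ1 → a ≫ σ2 = b ≫ σ2 → a = b :=
    hSKψ.jm hN
  have jmsc : ∀ {T : 𝒞} (a b : T ⟶ SCo), a ≫ sc1 = b ≫ sc1 → a ≫ sc2 = b ≫ sc2 → a = b :=
    hSKe'.jm hN
  -- the morphism ḡ between the star kernels
  have hgbcond : (sc1 ≫ (pullback.fst φ φ)) ≫ ψ = (sc2 ≫ (pullback.fst φ φ)) ≫ ψ := by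
    simp only [Category.assoc, ← he'1]
    rw [← Category.assoc, ← Category.assoc, hSKe'.2.1]
  obtain ⟨gb, ⟨hgbσ1, hgbσ2⟩, -⟩ := hSKψ.2.2 (sc1 ≫ (pullback.fst φ φ)) (sc2 ≫ (pullback.fst φ φ))
    (hN sc1 (pullback.fst φ φ) (Or.inl hSKe'.1)) hgbcond
  -- ḡ is split epi
  have ht1c : σ1 ≫ φ = σ1 ≫ φ := rfl
  have ht2c : σ2 ≫ φ = σ2 ≫ φ := rfl
  set t1s : Sψ ⟶ pullback φ φ := pullback.lift σ1 σ1 ht1c with ht1sdef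
  set t2s : Sψ ⟶ pullback φ φ := pullback.lift σ2 σ2 ht2c with ht2sdef
  have hNt1s : N t1s := by
    refine N_of_components hcoeq hstab hN htriv hprod
      (fun a b h1 h2 => pullback.hom_ext h1 h2) ?_ ?_ ?_
    · rw [ht1sdef, pullback.lift_fst]; exact hSKψ.1
    · rw [ht1sdef, pullback.lift_snd]; exact hSKψ.1
    · intro S' e y1 y2 htrS he hy1 hy2
      have hyφ : y1 ≫ φ = y2 ≫ φ := by
        refine he.epi ?_
        rw [← Category.assoc, ← Category.assoc, hy1, hy2, ht1sdef]
        simp only [pullback.lift_fst, pullback.lift_snd]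
      exact ⟨pullback.lift y1 y2 hyφ, pullback.lift_fst _ _ _, pullback.lift_snd _ _ _⟩
  have ht12e : t1s ≫ e' = t2s ≫ e' := by
    refine Rψ.jm _ _ ?_ ?_
    · rw [Category.assoc, Category.assoc, he'1, ← Category.assoc, ← Category.assoc,
        ht1sdef, ht2sdef, pullback.lift_fst, pullback.lift_fst, hSKψ.2.1]
    · rw [Category.assoc, Category.assoc, he'2, ← Category.assoc, ← Category.assoc,
        ht1sdef, ht2sdef, pullback.lift_snd, pullback.lift_snd, hSKψ.2.1]
  obtain ⟨sb, ⟨hsb1, hsb2⟩, -⟩ := hSKe'.2.2 t1s t2s hNt1s ht12e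
  have hsbgb : sb ≫ gb = 𝟙 Sψ := by
    refine jmσ _ _ ?_ ?_
    · rw [Category.assoc, hgbσ1, ← Category.assoc, hsb1, ht1sdef, pullback.lift_fst,
        Category.id_comp]
    · rw [Category.assoc, hgbσ2, ← Category.assoc, hsb2, ht2sdef, pullback.lift_fst,
        Category.id_comp]
  have hgbre : IsRegEpi gb := isRegEpi_of_split gb sb hsbgb
  -- δ̄
  obtain ⟨δb, ⟨hδb1, hδb2⟩, -⟩ := hSKψ.2.2 nX nX hNnX rfl
  -- the three stars of pullback relations
  obtain ⟨Vo, ν1, ν2, hV⟩ := starPullbackExists (N := N) hker (𝟙 X) (pullback.fst φ φ)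
  obtain ⟨Uo, χ1, χ2, hU⟩ := starPullbackExists (N := N) hker ψ Rψ.p1
  obtain ⟨Po, τ1, τ2, hP⟩ := starPullbackExists (N := N) hker δb gb
  have jmν : ∀ {T : 𝒞} (a b : T ⟶ Vo), a ≫ ν1 = b ≫ ν1 → a ≫ ν2 = b ≫ ν2 → a = b :=
    hV.jm hN
  have hν12 : ν1 = ν2 ≫ (pullback.fst φ φ) := by
    have := hV.2.1; rwa [Category.comp_id] at this
  -- λ
  have hlamcond : ν1 ≫ ψ = (ν2 ≫ e') ≫ Rψ.p1 := by
    rw [hν12, Category.assoc, Category.assoc, he'1]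
  obtain ⟨lam, ⟨hlam1, hlam2⟩, -⟩ := hU.2.2 ν1 (ν2 ≫ e') hV.1 hlamcond
  -- π1 and π2
  have hπ1cond : (τ1 ≫ nX) ≫ 𝟙 X = (τ2 ≫ sc1) ≫ (pullback.fst φ φ) := by
    rw [Category.comp_id, ← hδb1, ← Category.assoc, hP.2.1, Category.assoc, hgbσ1,
      ← Category.assoc]
  obtain ⟨π1, ⟨hπ1ν1, hπ1ν2⟩, -⟩ := hV.2.2 (τ1 ≫ nX) (τ2 ≫ sc1)
    (hN τ1 nX (Or.inr hNnX)) hπ1cond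
  have hπ2cond : (τ1 ≫ nX) ≫ 𝟙 X = (τ2 ≫ sc2) ≫ (pullback.fst φ φ) := by
    rw [Category.comp_id, ← hδb2, ← Category.assoc, hP.2.1, Category.assoc, hgbσ2,
      ← Category.assoc]
  obtain ⟨π2, ⟨hπ2ν1, hπ2ν2⟩, -⟩ := hV.2.2 (τ1 ≫ nX) (τ2 ≫ sc2)
    (hN τ1 nX (Or.inr hNnX)) hπ2cond
  -- apply the cuboid lemma
  have hconc := hcub (𝟙 X) e' ψ (pullback.fst φ φ) Rψ.p1 (𝟙 X) ψ nX nX sc1 sc2 σ1 σ2 gb δb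
    ν1 ν2 χ1 χ2 τ1 τ2 lam π1 π2 hgcre hfre hgbre he'1 rfl hSKψ.1 hSK1 hC1 hSKe' hCe'
    hgbσ1 hgbσ2 (by rw [Category.comp_id]; exact hδb1) (by rw [Category.comp_id]; exact hδb2)
    hV hU hP (by rw [Category.comp_id]; exact hlam1) hlam2
    hπ1ν1 hπ1ν2 hπ2ν1 hπ2ν2 ⟨hSKψ, hCψ⟩
  have hlamre : IsRegEpi lam := hconc.2.isRegEpi
  -- extraction of the inclusion
  obtain ⟨ea, hea, heap1, heap2⟩ := hτa
  obtain ⟨eb, heb, hebp1, hebp2⟩ := hτb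
  set fa := pullback.fst sψ.p2 (kerPairRel φ).p1 with hfa
  set sa := pullback.snd sψ.p2 (kerPairRel φ).p1 with hsa
  have hPB1 : fa ≫ sψ.p2 = sa ≫ (kerPairRel φ).p1 := pullback.condition
  have hNa : N (fa ≫ sψ.p1) := hN fa sψ.p1 (Or.inr hLψ.2.1)
  have hsψcomm : sψ.p1 ≫ ψ = sψ.p2 ≫ ψ := by
    obtain ⟨jψ, hjψ1, hjψ2⟩ := hLψ.1
    rw [← hjψ1, ← hjψ2, Category.assoc, Category.assoc]
    show jψ ≫ pullback.fst ψ ψ ≫ ψ = jψ ≫ pullback.snd ψ ψ ≫ ψ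
    exact congrArg (jψ ≫ ·) (pullback.condition (f := ψ) (g := ψ))
  have hηcond : (fa ≫ sψ.p1) ≫ ψ = (sa ≫ e') ≫ Rψ.p1 := by
    rw [Category.assoc, hsψcomm, ← Category.assoc, hPB1]
    show (sa ≫ pullback.fst φ φ) ≫ ψ = (sa ≫ e') ≫ Rψ.p1
    erw [Category.assoc, Category.assoc, he'1]
    rfl
  obtain ⟨η, ⟨hη1, hη2⟩, -⟩ := hU.2.2 (fa ≫ sψ.p1) (sa ≫ e') hNa hηcond
  set q := pullback.fst η lam with hq
  set ζ := pullback.snd η lam with hζ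
  have hqre : IsRegEpi q := hstab _ _ _ _ (IsPullback.of_hasPullback η lam) hlamre
  have hQcond : q ≫ η = ζ ≫ lam := pullback.condition
  have hζν1 : ζ ≫ ν1 = q ≫ fa ≫ sψ.p1 := by
    rw [← hlam1, ← Category.assoc, ← hQcond, Category.assoc, hη1]
  have hζe' : ζ ≫ ν2 ≫ e' = q ≫ sa ≫ e' := by
    rw [← hlam2, ← Category.assoc, ← hQcond, Category.assoc, hη2]
  set m := ζ ≫ ν2 ≫ (pullback.snd φ φ) with hm
  have hmψ : m ≫ ψ = (q ≫ sa ≫ (pullback.snd φ φ)) ≫ ψ := by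
    have l1 : m ≫ ψ = ζ ≫ ν2 ≫ e' ≫ Rψ.p2 := by
      rw [hm, he'2]
      simp only [Category.assoc]
    have l2 : ζ ≫ ν2 ≫ e' ≫ Rψ.p2 = q ≫ sa ≫ e' ≫ Rψ.p2 := by
      exact ((by simp only [Category.assoc] : ζ ≫ ν2 ≫ e' ≫ Rψ.p2 = (ζ ≫ ν2 ≫ e') ≫ Rψ.p2).trans
        (congrArg (· ≫ Rψ.p2) hζe')).trans
        ((Category.assoc _ _ _).trans (congrArg (q ≫ ·) (Category.assoc sa e' Rψ.p2)))
    have l3 : q ≫ sa ≫ e' ≫ Rψ.p2 = (q ≫ sa ≫ (pullback.snd φ φ)) ≫ ψ := by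
      erw [he'2]
      simp only [Category.assoc]
      exact congrArg (q ≫ ·) (Category.assoc sa (pullback.snd φ φ) ψ).symm
    rw [l1, l2, l3]
  -- the relation (ν1, ν2 ≫ snd) is a star subrelation of Eq(φ)
  have hVjm : ∀ {T : 𝒞} (a' b' : T ⟶ Vo), a' ≫ ν1 = b' ≫ ν1 →
      a' ≫ ν2 ≫ pullback.snd φ φ = b' ≫ ν2 ≫ pullback.snd φ φ → a' = b' := by
    intro T a' b' h1 h2
    refine jmν a' b' h1 (pullback.hom_ext ?_ ?_)
    · show (a' ≫ ν2) ≫ pullback.fst φ φ = (b' ≫ ν2) ≫ pullback.fst φ φ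
      rw [Category.assoc, Category.assoc, ← hν12]
      exact h1
    · show (a' ≫ ν2) ≫ pullback.snd φ φ = (b' ≫ ν2) ≫ pullback.snd φ φ
      simpa only [Category.assoc] using h2
  obtain ⟨jV, hjV1, hjV2⟩ := hLφ.2.2 ⟨Vo, ν1, ν2 ≫ pullback.snd φ φ, hVjm⟩
    ⟨ν2, hν12.symm, rfl⟩ hV.1
  have hjV1' : jV ≫ sφ.p1 = ν1 := hjV1
  have hjV2' : jV ≫ sφ.p2 = ν2 ≫ pullback.snd φ φ := hjV2
  set κsnd : _ ⟶ pullback ψ ψ := pullback.lift m (q ≫ sa ≫ (pullback.snd φ φ)) hmψ with hκsnd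
  have hκcond : (ζ ≫ jV) ≫ sφ.p2 = κsnd ≫ (kerPairRel ψ).p1 := by
    rw [Category.assoc, hjV2']
    show ζ ≫ ν2 ≫ pullback.snd φ φ = κsnd ≫ pullback.fst ψ ψ
    rw [hκsnd, pullback.lift_fst, hm]
  set κ := pullback.lift (ζ ≫ jV) κsnd hκcond with hκ
  have htarget1 : (κ ≫ eb) ≫ τb.p1 = (q ≫ ea) ≫ τa.p1 := by
    have l : (κ ≫ eb) ≫ τb.p1 = ζ ≫ ν1 := by
      erw [Category.assoc, hebp1, ← Category.assoc, hκ, pullback.lift_fst,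
        Category.assoc, hjV1']
    rw [l, hζν1, Category.assoc, heap1]
  have htarget2 : (κ ≫ eb) ≫ τb.p2 = (q ≫ ea) ≫ τa.p2 := by
    erw [Category.assoc, hebp2, ← Category.assoc, hκ, pullback.lift_snd]
    show κsnd ≫ pullback.snd ψ ψ = (q ≫ ea) ≫ τa.p2
    rw [hκsnd, pullback.lift_snd, Category.assoc, heap2, kerPairRel_p2]
  have hqea : IsRegEpi (q ≫ ea) := IsRegEpi.comp hstab hqre hea
  obtain ⟨j, -, hj1, hj2⟩ := fillIn hqea (κ ≫ eb) τa.p1 τa.p2 τb.jm htarget1 htarget2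
  exact ⟨j, hj1, hj2⟩

end Backward

/-- A star-regular category with saturating regular
epimorphisms, enough trivial objects and `N`-trivial objects closed under binary
products is 2-star-permutable iff the Star-Upper Cuboid Lemma holds in it. -/
theorem statement12 [HasFiniteLimits 𝒞]
    (hcoeq : KernelPairsHaveCoequalisers 𝒞) (hstab : RegEpisStable 𝒞)
    (N : MorphismProperty 𝒞) (hN : IsIdeal N) (hker : HasNKernels N)
    (hsr : StarRegular 𝒞 N)
    (hsat : ∀ {X Y : 𝒞} (f : X ⟶ Y), IsRegEpi f → Saturating N f)
    (htriv : EnoughTrivialObjects N)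
    (hprod : ∀ X Y : 𝒞, NTrivial N X → NTrivial N Y → NTrivial N (X ⨯ Y)) :
    TwoStarPermutable 𝒞 N ↔ StarUpperCuboidLemma 𝒞 N := by
  constructor
  · intro tsp
    exact forward_direction hcoeq hstab hN hker hsr hsat htriv hprod tsp
  · intro hcub
    intro X Y Z f g hf hg sf sg hLf hLg τ₁ τ₂ h1 h2
    exact ⟨cuboid_incl hcoeq hstab hN hker hsr htriv hprod hcub f g hf hg sf sg
        hLf hLg τ₁ τ₂ h1 h2,
      cuboid_incl hcoeq hstab hN hker hsr htriv hprod hcub g f hg hf sg sf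
        hLg hLf τ₂ τ₁ h2 h1⟩

end Paper
end

section
/- A regular category C is a Mal'tsev category if and only if every square of type (1) in C is a regular pushout, i.e. the comparison morphism ⟨g, c⟩: C → D×_B A to the pullback of d and f is a regular epimorphism. -/
open CategoryTheory CategoryTheory.Limits

universe v u

namespace Paper

variable {𝒞 : Type u} [Category.{v} 𝒞]

variable {X Y Z : 𝒞}

section Statement13Aux

/-- Regular epimorphisms are epimorphisms. -/
theorem IsRegEpi.epi' {A B : 𝒞} {f : A ⟶ B} (h : IsRegEpi f) : Epi f := by
  obtain ⟨Z, a, b, hc, hu⟩ := h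
  constructor
  intro T u v huv
  obtain ⟨w, -, hUniq⟩ := hu (f ≫ u)
    (by rw [← Category.assoc, ← Category.assoc, hc])
  rw [hUniq u rfl, hUniq v huv.symm]

/-- Split epimorphisms are regular epimorphisms. -/
theorem isRegEpi_of_section {A B : 𝒞} (f : A ⟶ B) (σ : B ⟶ A) (hσ : σ ≫ f = 𝟙 B) :
    IsRegEpi f := by
  refine ⟨A, f ≫ σ, 𝟙 A,
    by rw [Category.assoc, hσ, Category.comp_id, Category.id_comp], ?_⟩
  intro T h hh
  rw [Category.id_comp, Category.assoc] at hh
  exact ⟨σ ≫ h, hh, fun y hy => by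
    rw [← Category.id_comp y, ← hσ, Category.assoc, hy]⟩

/-- A regular epi which is mono is an isomorphism. -/
theorem IsRegEpi.inv_of_mono {A B : 𝒞} {m : A ⟶ B} (h : IsRegEpi m) (hm : Mono m) :
    ∃ u : B ⟶ A, m ≫ u = 𝟙 A ∧ u ≫ m = 𝟙 B := by
  haveI := hm
  haveI he : Epi m := h.epi'
  obtain ⟨Z, a, b, hc, hu⟩ := h
  have hab : a = b := by rwa [cancel_mono] at hc
  obtain ⟨u, hu1, -⟩ := hu (𝟙 A) (by rw [hab])
  refine ⟨u, hu1, ?_⟩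
  rw [← cancel_epi m, ← Category.assoc, hu1, Category.id_comp, Category.comp_id]

/-- Descent along a regular epimorphism: a morphism coequalising the kernel pair
of a regular epi factors through it. -/
theorem regEpi_desc [HasPullbacks 𝒞] {A B T : 𝒞} {π : A ⟶ B} (h : IsRegEpi π)
    (g : A ⟶ T) (hg : pullback.fst π π ≫ g = pullback.snd π π ≫ g) :
    ∃ u : B ⟶ T, π ≫ u = g := by
  obtain ⟨Z, a, b, hc, hu⟩ := h
  have key : a ≫ g = b ≫ g := by
    calc a ≫ g = (pullback.lift a b hc ≫ pullback.fst π π) ≫ g := by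
          rw [pullback.lift_fst]
      _ = (pullback.lift a b hc ≫ pullback.snd π π) ≫ g := by
          rw [Category.assoc, Category.assoc, hg]
      _ = b ≫ g := by rw [pullback.lift_snd]
  obtain ⟨u, hu1, -⟩ := hu g key
  exact ⟨u, hu1⟩

/-- Image factorisation (regular epi followed by mono) in a regular category. -/
theorem image_fact [HasFiniteLimits 𝒞] (hcoeq : KernelPairsHaveCoequalisers 𝒞)
    (hstab : RegEpisStable 𝒞) {A B : 𝒞} (φ : A ⟶ B) :
    ∃ (I : 𝒞) (q : A ⟶ I) (m : I ⟶ B), IsRegEpi q ∧ Mono m ∧ q ≫ m = φ := by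
  obtain ⟨Q, q, hab, hu⟩ := hcoeq φ (pullback.fst φ φ) (pullback.snd φ φ)
    (IsPullback.of_hasPullback φ φ)
  obtain ⟨i, hqi, -⟩ := hu φ pullback.condition
  have hq : IsRegEpi q := ⟨_, _, _, hab, hu⟩
  refine ⟨Q, q, i, hq, ?_, hqi⟩
  have hw1 : (pullback.fst φ φ ≫ q) ≫ i = pullback.snd φ φ ≫ φ := by
    rw [Category.assoc, hqi]; exact pullback.condition
  have hw2 : pullback.fst i φ ≫ i = (pullback.snd i φ ≫ q) ≫ i := by
    rw [Category.assoc, hqi]; exact pullback.condition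
  have hψpb : IsPullback (pullback.lift (pullback.fst φ φ ≫ q) (pullback.snd φ φ) hw1)
      (pullback.fst φ φ) (pullback.fst i φ) q := by
    refine IsPullback.of_right ?_ (pullback.lift_fst _ _ _)
      (IsPullback.of_hasPullback i φ).flip
    rw [pullback.lift_snd, hqi]
    exact (IsPullback.of_hasPullback φ φ).flip
  have hψ'pb : IsPullback (pullback.lift (pullback.fst i φ) (pullback.snd i φ ≫ q) hw2)
      (pullback.snd i φ) (pullback.snd i i) q := by
    refine IsPullback.of_right ?_ (pullback.lift_snd _ _ _)
      (IsPullback.of_hasPullback i i)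
    rw [pullback.lift_fst, hqi]
    exact IsPullback.of_hasPullback i φ
  haveI heψ : Epi (pullback.lift (pullback.fst φ φ ≫ q) (pullback.snd φ φ) hw1) :=
    (hstab _ _ _ _ hψpb hq).epi'
  haveI heψ' : Epi (pullback.lift (pullback.fst i φ) (pullback.snd i φ ≫ q) hw2) :=
    (hstab _ _ _ _ hψ'pb hq).epi'
  have e1 : pullback.lift (pullback.fst φ φ ≫ q) (pullback.snd φ φ) hw1 ≫
        pullback.lift (pullback.fst i φ) (pullback.snd i φ ≫ q) hw2 ≫ pullback.fst i i
      = pullback.lift (pullback.fst φ φ ≫ q) (pullback.snd φ φ) hw1 ≫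
        pullback.lift (pullback.fst i φ) (pullback.snd i φ ≫ q) hw2 ≫ pullback.snd i i := by
    rw [pullback.lift_fst, pullback.lift_fst, pullback.lift_snd, ← Category.assoc,
      pullback.lift_snd]
    exact hab
  rw [cancel_epi, cancel_epi] at e1
  constructor
  intro T u v huv
  rw [← pullback.lift_fst u v huv, e1, pullback.lift_snd]

/-- Image of a span: every span factors through a relation via a regular epi. -/
theorem span_image [HasFiniteLimits 𝒞] (hcoeq : KernelPairsHaveCoequalisers 𝒞)
    (hstab : RegEpisStable 𝒞) {W A B : 𝒞} (a : W ⟶ A) (b : W ⟶ B) :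
    ∃ (τ : Rel 𝒞 A B) (e : W ⟶ τ.R), IsRegEpi e ∧ e ≫ τ.p1 = a ∧ e ≫ τ.p2 = b := by
  obtain ⟨I, q, m, hq, hm, hqm⟩ := image_fact hcoeq hstab (prod.lift a b)
  haveI := hm
  refine ⟨⟨I, m ≫ prod.fst, m ≫ prod.snd, ?_⟩, q, hq, ?_, ?_⟩
  · intro Z x y h1 h2
    rw [← cancel_mono m]
    apply Limits.prod.hom_ext
    · simpa [Category.assoc] using h1
    · simpa [Category.assoc] using h2
  · show q ≫ m ≫ prod.fst = a
    rw [← Category.assoc, hqm, prod.lift_fst]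
  · show q ≫ m ≫ prod.snd = b
    rw [← Category.assoc, hqm, prod.lift_snd]

/-- The square condition of type (1). -/
def SquaresRegular' (𝒞 : Type u) [Category.{v} 𝒞] [HasPullbacks 𝒞] : Prop :=
  ∀ {A B E D : 𝒞} (f : A ⟶ B) (s : B ⟶ A) (g : E ⟶ D) (t : D ⟶ E)
    (c : E ⟶ A) (d : D ⟶ B) (hsq : IsSquare1 f s g t c d),
    IsRegEpi (pullback.lift g c hsq.comm1.symm : E ⟶ pullback d f)

/-- Bourn's lemma: given the square condition, a subobject of a pullback of split
epis through which both canonical sections factor is the whole pullback. -/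
theorem bourn_retract [HasPullbacks 𝒞] (hsq : SquaresRegular' 𝒞)
    {A B D M : 𝒞} (f : A ⟶ B) (s : B ⟶ A) (hs : s ≫ f = 𝟙 B)
    (d : D ⟶ B) (t : B ⟶ D) (ht : t ≫ d = 𝟙 B)
    (m : M ⟶ pullback d f) (hm : Mono m)
    (k1 : D ⟶ M) (hk1 : k1 ≫ m = pullback.lift (𝟙 D) (d ≫ s)
      (by rw [Category.id_comp, Category.assoc, hs, Category.comp_id]))
    (k2 : A ⟶ M) (hk2 : k2 ≫ m = pullback.lift (f ≫ t) (𝟙 A)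
      (by rw [Category.id_comp, Category.assoc, ht, Category.comp_id])) :
    ∃ χ : pullback d f ⟶ M, χ ≫ m = 𝟙 (pullback d f) ∧ m ≫ χ = 𝟙 M := by
  have sq : IsSquare1 f s (m ≫ pullback.fst d f) k1 (m ≫ pullback.snd d f) d :=
    { sec_f := hs
      sec_g := by rw [← Category.assoc, hk1, pullback.lift_fst]
      regepi_c := isRegEpi_of_section _ k2
        (by rw [← Category.assoc, hk2, pullback.lift_snd])
      regepi_d := isRegEpi_of_section d t ht
      comm1 := by rw [Category.assoc, Category.assoc, pullback.condition]
      comm2 := by rw [← Category.assoc, hk1, pullback.lift_snd] }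
  have hre := hsq f s (m ≫ pullback.fst d f) k1 (m ≫ pullback.snd d f) d sq
  have hlift : pullback.lift (m ≫ pullback.fst d f) (m ≫ pullback.snd d f)
      sq.comm1.symm = m := by
    apply pullback.hom_ext
    · rw [pullback.lift_fst]
    · rw [pullback.lift_snd]
  rw [hlift] at hre
  obtain ⟨χ, h1, h2⟩ := hre.inv_of_mono hm
  exact ⟨χ, h2, h1⟩

/-- Given the square condition, every reflexive relation is transitive. -/
theorem transitive_of_squares [HasFiniteLimits 𝒞] (hsq : SquaresRegular' 𝒞)
    {X : 𝒞} (ρ : Rel 𝒞 X X) (hρ : ρ.IsReflexive) : ρ.IsTransitive := by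
  obtain ⟨r, hr1, hr2⟩ := hρ
  set F : pullback ρ.p2 ρ.p1 ⟶ X ⨯ X :=
    prod.lift (pullback.fst ρ.p2 ρ.p1 ≫ ρ.p1) (pullback.snd ρ.p2 ρ.p1 ≫ ρ.p2) with hF
  set G : ρ.R ⟶ X ⨯ X := prod.lift ρ.p1 ρ.p2 with hG
  have hFfst : F ≫ (prod.fst : X ⨯ X ⟶ X) = pullback.fst ρ.p2 ρ.p1 ≫ ρ.p1 := by
    rw [hF]; exact prod.lift_fst _ _
  have hFsnd : F ≫ (prod.snd : X ⨯ X ⟶ X) = pullback.snd ρ.p2 ρ.p1 ≫ ρ.p2 := by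
    rw [hF]; exact prod.lift_snd _ _
  have hGfst : G ≫ (prod.fst : X ⨯ X ⟶ X) = ρ.p1 := by
    rw [hG]; exact prod.lift_fst _ _
  have hGsnd : G ≫ (prod.snd : X ⨯ X ⟶ X) = ρ.p2 := by
    rw [hG]; exact prod.lift_snd _ _
  haveI hmG : Mono G := by
    constructor
    intro Z x y h
    apply ρ.jm
    · have e1 : x ≫ G ≫ prod.fst = y ≫ G ≫ prod.fst := by
        rw [← Category.assoc, h, Category.assoc]
      rwa [hGfst] at e1
    · have e1 : x ≫ G ≫ prod.snd = y ≫ G ≫ prod.snd := by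
        rw [← Category.assoc, h, Category.assoc]
      rwa [hGsnd] at e1
  have hmono : Mono (pullback.fst F G) := inferInstance
  have hj1 : pullback.lift (𝟙 ρ.R) (ρ.p2 ≫ r)
      (by rw [Category.id_comp, Category.assoc, hr1, Category.comp_id]) ≫ F
      = 𝟙 ρ.R ≫ G := by
    apply Limits.prod.hom_ext
    · simp only [Category.assoc, Category.id_comp, hFfst, hGfst,
        pullback.lift_fst_assoc, pullback.lift_snd_assoc]
    · simp only [Category.assoc, Category.id_comp, hFsnd, hGsnd,
        pullback.lift_fst_assoc, pullback.lift_snd_assoc, hr2, Category.comp_id]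
  have hj2 : pullback.lift (ρ.p1 ≫ r) (𝟙 ρ.R)
      (by rw [Category.id_comp, Category.assoc, hr2, Category.comp_id]) ≫ F
      = 𝟙 ρ.R ≫ G := by
    apply Limits.prod.hom_ext
    · simp only [Category.assoc, Category.id_comp, hFfst, hGfst,
        pullback.lift_fst_assoc, pullback.lift_snd_assoc, hr1, Category.comp_id]
    · simp only [Category.assoc, Category.id_comp, hFsnd, hGsnd,
        pullback.lift_fst_assoc, pullback.lift_snd_assoc]
  obtain ⟨χ, hχ1, -⟩ := bourn_retract hsq ρ.p1 r hr1 ρ.p2 r hr2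
    (pullback.fst F G) hmono
    (pullback.lift (pullback.lift (𝟙 ρ.R) (ρ.p2 ≫ r) _) (𝟙 ρ.R) hj1)
    (pullback.lift_fst _ _ _)
    (pullback.lift (pullback.lift (ρ.p1 ≫ r) (𝟙 ρ.R) _) (𝟙 ρ.R) hj2)
    (pullback.lift_fst _ _ _)
  refine ⟨χ ≫ pullback.snd F G, ?_, ?_⟩
  · have h1 : pullback.snd F G ≫ ρ.p1
        = pullback.fst F G ≫ (pullback.fst ρ.p2 ρ.p1 ≫ ρ.p1) := by
      have e1 : (pullback.fst F G ≫ F) ≫ prod.fst = (pullback.snd F G ≫ G) ≫ prod.fst := by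
        rw [pullback.condition]
      rw [Category.assoc, Category.assoc, hFfst, hGfst] at e1
      exact e1.symm
    rw [Category.assoc, h1, ← Category.assoc, hχ1, Category.id_comp]
  · have h1 : pullback.snd F G ≫ ρ.p2
        = pullback.fst F G ≫ (pullback.snd ρ.p2 ρ.p1 ≫ ρ.p2) := by
      have e1 : (pullback.fst F G ≫ F) ≫ prod.snd = (pullback.snd F G ≫ G) ≫ prod.snd := by
        rw [pullback.condition]
      rw [Category.assoc, Category.assoc, hFsnd, hGsnd] at e1
      exact e1.symm
    rw [Category.assoc, h1, ← Category.assoc, hχ1, Category.id_comp]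

/-- The chain lemma: a Mal'tsev-style composition of witnesses, up to a cover. -/
theorem chain_lemma [HasFiniteLimits 𝒞] (hcoeq : KernelPairsHaveCoequalisers 𝒞)
    (hstab : RegEpisStable 𝒞)
    (htrans : ∀ {Z : 𝒞} (τ : Rel 𝒞 Z Z), τ.IsReflexive → τ.IsTransitive)
    {R A B P0 : 𝒞} (p1 : R ⟶ A) (p2 : R ⟶ B) (U V K w1 w2 : P0 ⟶ R)
    (hw11 : w1 ≫ p1 = U ≫ p1) (hw12 : w1 ≫ p2 = V ≫ p2)
    (hw21 : w2 ≫ p1 = V ≫ p1) (hw22 : w2 ≫ p2 = K ≫ p2) :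
    ∃ (P' : 𝒞) (π : P' ⟶ P0) (w : P' ⟶ R), IsRegEpi π ∧
      w ≫ p1 = π ≫ U ≫ p1 ∧ w ≫ p2 = π ≫ K ≫ p2 := by
  set H : R ⨯ R ⟶ A ⨯ B := prod.lift (prod.fst ≫ p1) (prod.snd ≫ p2) with hH
  set G : R ⟶ A ⨯ B := prod.lift p1 p2 with hG
  have hHfst : H ≫ (prod.fst : A ⨯ B ⟶ A) = prod.fst ≫ p1 := by
    rw [hH]; exact prod.lift_fst _ _
  have hHsnd : H ≫ (prod.snd : A ⨯ B ⟶ B) = prod.snd ≫ p2 := by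
    rw [hH]; exact prod.lift_snd _ _
  have hGfst : G ≫ (prod.fst : A ⨯ B ⟶ A) = p1 := by
    rw [hG]; exact prod.lift_fst _ _
  have hGsnd : G ≫ (prod.snd : A ⨯ B ⟶ B) = p2 := by
    rw [hG]; exact prod.lift_snd _ _
  set wa : pullback H G ⟶ R := pullback.fst H G ≫ prod.fst with hwa
  set wb : pullback H G ⟶ R := pullback.fst H G ≫ prod.snd with hwb
  set wit : pullback H G ⟶ R := pullback.snd H G with hwit
  have hwap : wit ≫ p1 = wa ≫ p1 := by
    have e1 : (pullback.fst H G ≫ H) ≫ prod.fst = (pullback.snd H G ≫ G) ≫ prod.fst := by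
      rw [pullback.condition]
    rw [Category.assoc, Category.assoc, hHfst, hGfst] at e1
    rw [hwit, hwa, Category.assoc]
    exact e1.symm
  have hwbp : wit ≫ p2 = wb ≫ p2 := by
    have e1 : (pullback.fst H G ≫ H) ≫ prod.snd = (pullback.snd H G ≫ G) ≫ prod.snd := by
      rw [pullback.condition]
    rw [Category.assoc, Category.assoc, hHsnd, hGsnd] at e1
    rw [hwit, hwb, Category.assoc]
    exact e1.symm
  obtain ⟨τ, e, he, hea, heb⟩ := span_image hcoeq hstab wa wb
  have hτrefl : τ.IsReflexive := by
    have hcd : prod.lift (𝟙 R) (𝟙 R) ≫ H = 𝟙 R ≫ G := by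
      apply Limits.prod.hom_ext
      · simp only [Category.assoc, Category.id_comp, hHfst, hGfst,
          prod.lift_fst_assoc]
      · simp only [Category.assoc, Category.id_comp, hHsnd, hGsnd,
          prod.lift_snd_assoc]
    refine ⟨pullback.lift (prod.lift (𝟙 R) (𝟙 R)) (𝟙 R) hcd ≫ e, ?_, ?_⟩
    · rw [Category.assoc, hea, hwa, ← Category.assoc, pullback.lift_fst,
        prod.lift_fst]
    · rw [Category.assoc, heb, hwb, ← Category.assoc, pullback.lift_fst,
        prod.lift_snd]
  obtain ⟨tt, ht1, ht2⟩ := htrans τ hτrefl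
  have hc1 : prod.lift U V ≫ H = w1 ≫ G := by
    apply Limits.prod.hom_ext
    · simp only [Category.assoc, hHfst, hGfst, prod.lift_fst_assoc]
      exact hw11.symm
    · simp only [Category.assoc, hHsnd, hGsnd, prod.lift_snd_assoc]
      exact hw12.symm
  have hc2 : prod.lift V K ≫ H = w2 ≫ G := by
    apply Limits.prod.hom_ext
    · simp only [Category.assoc, hHfst, hGfst, prod.lift_fst_assoc]
      exact hw21.symm
    · simp only [Category.assoc, hHsnd, hGsnd, prod.lift_snd_assoc]
      exact hw22.symm
  set ω1 : P0 ⟶ pullback H G := pullback.lift (prod.lift U V) w1 hc1 with hω1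
  set ω2 : P0 ⟶ pullback H G := pullback.lift (prod.lift V K) w2 hc2 with hω2
  have hz1a : (ω1 ≫ e) ≫ τ.p1 = U := by
    rw [Category.assoc, hea, hwa, hω1, ← Category.assoc, pullback.lift_fst,
      prod.lift_fst]
  have hz1b : (ω1 ≫ e) ≫ τ.p2 = V := by
    rw [Category.assoc, heb, hwb, hω1, ← Category.assoc, pullback.lift_fst,
      prod.lift_snd]
  have hz2a : (ω2 ≫ e) ≫ τ.p1 = V := by
    rw [Category.assoc, hea, hwa, hω2, ← Category.assoc, pullback.lift_fst,
      prod.lift_fst]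
  have hz2b : (ω2 ≫ e) ≫ τ.p2 = K := by
    rw [Category.assoc, heb, hwb, hω2, ← Category.assoc, pullback.lift_fst,
      prod.lift_snd]
  have hzz : (ω1 ≫ e) ≫ τ.p2 = (ω2 ≫ e) ≫ τ.p1 := by rw [hz1b, hz2a]
  set η : P0 ⟶ τ.R := pullback.lift (ω1 ≫ e) (ω2 ≫ e) hzz ≫ tt with hη
  have hη1 : η ≫ τ.p1 = U := by
    rw [hη, Category.assoc, ht1, ← Category.assoc, pullback.lift_fst, hz1a]
  have hη2 : η ≫ τ.p2 = K := by
    rw [hη, Category.assoc, ht2, ← Category.assoc, pullback.lift_snd, hz2b]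
  have hπ : IsRegEpi (pullback.fst η e) :=
    hstab _ _ _ _ (IsPullback.of_hasPullback η e) he
  refine ⟨pullback η e, pullback.fst η e, pullback.snd η e ≫ wit, hπ, ?_, ?_⟩
  · have h2 : pullback.snd η e ≫ wa = pullback.fst η e ≫ U := by
      rw [← hea, ← Category.assoc, ← pullback.condition, Category.assoc, hη1]
    rw [Category.assoc, hwap, ← Category.assoc, h2, Category.assoc]
  · have h2 : pullback.snd η e ≫ wb = pullback.fst η e ≫ K := by
      rw [← heb, ← Category.assoc, ← pullback.condition, Category.assoc, hη2]
    rw [Category.assoc, hwbp, ← Category.assoc, h2, Category.assoc]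

end Statement13Aux

/-- A regular category is a Mal'tsev category iff every square
of type (1) is a regular pushout, i.e. the comparison morphism
`⟨g,c⟩ : C → D ×_B A` is a regular epimorphism. -/
theorem statement13 [HasFiniteLimits 𝒞]
    (hcoeq : KernelPairsHaveCoequalisers 𝒞) (hstab : RegEpisStable 𝒞) :
    IsMaltsev 𝒞 ↔
      ∀ {A B E D : 𝒞} (f : A ⟶ B) (s : B ⟶ A) (g : E ⟶ D) (t : D ⟶ E)
        (c : E ⟶ A) (d : D ⟶ B) (hsq : IsSquare1 f s g t c d),
        IsRegEpi (pullback.lift g c hsq.comm1.symm : E ⟶ pullback d f) := by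
  constructor
  · -- Mal'tsev implies that squares of type (1) are regular pushouts.
    intro hM A B E D f s g t c d hsq1
    obtain ⟨I, q, m, hq, hm, hqm⟩ :=
      image_fact hcoeq hstab (pullback.lift g c hsq1.comm1.symm)
    haveI := hm
    set p1 : I ⟶ D := m ≫ pullback.fst d f with hp1
    set p2 : I ⟶ A := m ≫ pullback.snd d f with hp2
    have hq1 : q ≫ p1 = g := by
      rw [hp1, ← Category.assoc, hqm, pullback.lift_fst]
    have hq2 : q ≫ p2 = c := by
      rw [hp2, ← Category.assoc, hqm, pullback.lift_snd]
    set π : pullback (pullback.snd d f) c ⟶ pullback d f :=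
      pullback.fst (pullback.snd d f) c with hπdef
    set ε : pullback (pullback.snd d f) c ⟶ E :=
      pullback.snd (pullback.snd d f) c with hεdef
    have hπreg : IsRegEpi π :=
      hstab _ _ _ _ (IsPullback.of_hasPullback (pullback.snd d f) c) hsq1.regepi_c
    have hcond : π ≫ pullback.snd d f = ε ≫ c := pullback.condition
    set umap : pullback (pullback.snd d f) c ⟶ I :=
      π ≫ pullback.fst d f ≫ t ≫ q with humap
    set jmap : pullback (pullback.snd d f) c ⟶ I := ε ≫ g ≫ t ≫ q with hjmap
    set kmap : pullback (pullback.snd d f) c ⟶ I := ε ≫ q with hkmap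
    have humap1 : umap ≫ p1 = π ≫ pullback.fst d f := by
      rw [humap]
      simp only [Category.assoc]
      rw [hq1, hsq1.sec_g, Category.comp_id]
    have humap2 : umap ≫ p2 = π ≫ pullback.fst d f ≫ d ≫ s := by
      rw [humap]
      simp only [Category.assoc]
      rw [hq2, ← hsq1.comm2]
    have hjmap1 : jmap ≫ p1 = ε ≫ g := by
      rw [hjmap]
      simp only [Category.assoc]
      rw [hq1, hsq1.sec_g, Category.comp_id]
    have hjmap2 : jmap ≫ p2 = π ≫ pullback.fst d f ≫ d ≫ s := by
      rw [hjmap]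
      simp only [Category.assoc]
      rw [hq2, ← hsq1.comm2, ← reassoc_of% hsq1.comm1, ← reassoc_of% hcond,
        ← reassoc_of% (pullback.condition (f := d) (g := f))]
    have hkmap1 : kmap ≫ p1 = ε ≫ g := by
      rw [hkmap]
      simp only [Category.assoc]
      rw [hq1]
    have hkmap2 : kmap ≫ p2 = π ≫ pullback.snd d f := by
      rw [hkmap]
      simp only [Category.assoc]
      rw [hq2, ← hcond]
    obtain ⟨P', π', w, hπ', hA, hB⟩ := chain_lemma hcoeq hstab
      (fun τ hτ => (hM τ hτ).2.2) p1 p2 umap jmap kmap umap kmap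
      rfl (humap2.trans hjmap2.symm) (hkmap1.trans hjmap1.symm) rfl
    have hA' : w ≫ p1 = π' ≫ π ≫ pullback.fst d f := by rw [hA, humap1]
    have hB' : w ≫ p2 = π' ≫ π ≫ pullback.snd d f := by rw [hB, hkmap2]
    have hwm : w ≫ m = π' ≫ π := by
      apply pullback.hom_ext
      · simp only [Category.assoc]
        rw [← hp1, hA']
      · simp only [Category.assoc]
        rw [← hp2, hB']
    have hk1' : pullback.fst π' π' ≫ w = pullback.snd π' π' ≫ w := by
      rw [← cancel_mono m]
      simp only [Category.assoc]
      rw [hwm, ← Category.assoc, ← Category.assoc, pullback.condition]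
    obtain ⟨w', hw'⟩ := regEpi_desc hπ' w hk1'
    haveI hepi' : Epi π' := hπ'.epi'
    have hw'm : w' ≫ m = π := by
      rw [← cancel_epi π', ← Category.assoc, hw', hwm]
    have hk2' : pullback.fst π π ≫ w' = pullback.snd π π ≫ w' := by
      rw [← cancel_mono m]
      simp only [Category.assoc]
      rw [hw'm, pullback.condition]
    obtain ⟨χ, hχ⟩ := regEpi_desc hπreg w' hk2'
    haveI hepi : Epi π := hπreg.epi'
    have hχm : χ ≫ m = 𝟙 (pullback d f) := by
      rw [← cancel_epi π, ← Category.assoc, hχ, hw'm, Category.comp_id]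
    have hmχ : m ≫ χ = 𝟙 I := by
      rw [← cancel_mono m, Category.assoc, hχm, Category.comp_id, Category.id_comp]
    obtain ⟨Z, α, β, hcZ, huZ⟩ := hq
    refine ⟨Z, α, β, ?_, ?_⟩
    · rw [← hqm, ← Category.assoc, ← Category.assoc, hcZ]
    · intro T h hh
      obtain ⟨u, hu1, hu2⟩ := huZ h hh
      refine ⟨χ ≫ u, ?_, ?_⟩
      · rw [← hqm]
        simp only [Category.assoc]
        have hmid : m ≫ χ ≫ u = u := by
          rw [← Category.assoc, hmχ, Category.id_comp]
        rw [hmid, hu1]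
      · intro y hy
        have h2 : q ≫ m ≫ y = h := by
          rw [← Category.assoc, hqm]; exact hy
        have h3 := hu2 (m ≫ y) h2
        rw [← h3, ← Category.assoc, hχm, Category.id_comp]
  · -- The square condition implies Mal'tsev.
    intro hsqs
    have hsq' : SquaresRegular' 𝒞 := fun f s g t c d h => hsqs f s g t c d h
    have htrans : ∀ {Z : 𝒞} (τ : Rel 𝒞 Z Z), τ.IsReflexive → τ.IsTransitive :=
      fun τ hτ => transitive_of_squares hsq' τ hτ
    intro X ρ hρ
    refine ⟨hρ, ?_, htrans ρ hρ⟩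
    obtain ⟨r, hr1, hr2⟩ := hρ
    have h12 : (ρ.p2 ≫ r) ≫ ρ.p2 = 𝟙 ρ.R ≫ ρ.p2 := by
      rw [Category.assoc, hr2, Category.comp_id, Category.id_comp]
    have h21 : (ρ.p1 ≫ r) ≫ ρ.p1 = 𝟙 ρ.R ≫ ρ.p1 := by
      rw [Category.assoc, hr1, Category.comp_id, Category.id_comp]
    obtain ⟨P', π, w, hπ, hA, hB⟩ := chain_lemma hcoeq hstab htrans ρ.p1 ρ.p2
      (ρ.p2 ≫ r) (𝟙 ρ.R) (ρ.p1 ≫ r) (ρ.p2 ≫ r) (ρ.p1 ≫ r) rfl h12 h21 rfl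
    have hA' : w ≫ ρ.p1 = π ≫ ρ.p2 := by
      rw [hA]
      simp only [Category.assoc]
      rw [hr1, Category.comp_id]
    have hB' : w ≫ ρ.p2 = π ≫ ρ.p1 := by
      rw [hB]
      simp only [Category.assoc]
      rw [hr2, Category.comp_id]
    have hker : pullback.fst π π ≫ w = pullback.snd π π ≫ w := by
      apply ρ.jm
      · simp only [Category.assoc]
        rw [hA', ← Category.assoc, ← Category.assoc, pullback.condition]
      · simp only [Category.assoc]
        rw [hB', ← Category.assoc, ← Category.assoc, pullback.condition]
    obtain ⟨sm, hsm⟩ := regEpi_desc hπ w hker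
    haveI hepi : Epi π := hπ.epi'
    refine ⟨sm, ?_, ?_⟩
    · rw [← cancel_epi π, ← Category.assoc, hsm, hA']
    · rw [← cancel_epi π, ← Category.assoc, hsm, hB']

end Paper
end

section
/- In a multi-pointed category with kernels, every morphism f: X → Y admits a star-kernel, and it is given by Eq(f)* ⇉ X, the largest star subrelation of the kernel pair of f. -/
open CategoryTheory CategoryTheory.Limits

universe v u

namespace Paper

variable {𝒞 : Type u} [Category.{v} 𝒞]

variable {X Y Z : 𝒞}

/-- In a multi-pointed category with kernels, every morphism
admits a star-kernel, and it is given by `Eq(f)*`, the largest star subrelation of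
the kernel pair of `f`. -/
theorem statement15 [HasFiniteLimits 𝒞]
    (N : MorphismProperty 𝒞) (hN : IsIdeal N) (hker : HasNKernels N)
    {X Y : 𝒞} (f : X ⟶ Y) :
    (∃ τ : Rel 𝒞 X X, IsLargestStarSub N (kerPairRel f) τ) ∧
    (∀ τ : Rel 𝒞 X X, IsLargestStarSub N (kerPairRel f) τ →
      IsStarKernel N f τ.p1 τ.p2) := by
  obtain ⟨K, n, hNn, hn⟩ := hker (pullback.fst f f)
  -- n is mono
  have nmono : ∀ {Z : 𝒞} (a b : Z ⟶ K), a ≫ n = b ≫ n → a = b := by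
    intro Z a b hab
    obtain ⟨u, _, huniq⟩ := hn (a ≫ n)
      (by simpa [Category.assoc] using hN a (n ≫ pullback.fst f f) (Or.inr hNn))
    exact (huniq a rfl).trans (huniq b hab.symm).symm
  -- the concrete largest star subrelation
  set τ₀ : Rel 𝒞 X X :=
    ⟨K, n ≫ pullback.fst f f, n ≫ pullback.snd f f, by
      intro Z a b h1 h2
      apply nmono
      apply pullback.hom_ext <;> simpa [Category.assoc] using ‹_ ≫ _ = _ ≫ _›⟩ with hτ₀
  have hτ₀p1 : τ₀.p1 = n ≫ pullback.fst f f := rfl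
  have hτ₀p2 : τ₀.p2 = n ≫ pullback.snd f f := rfl
  have hlargest : IsLargestStarSub N (kerPairRel f) τ₀ := by
    refine ⟨⟨n, rfl, rfl⟩, hNn, ?_⟩
    intro σ ⟨j, hj1, hj2⟩ hNσ
    simp only [kerPairRel] at hj1 hj2
    have : N (j ≫ pullback.fst f f) := by exact (congrArg (fun g => N g) hj1).mpr hNσ
    obtain ⟨u, hu, _⟩ := hn j this
    exact ⟨u, by rw [hτ₀p1, ← Category.assoc, hu, hj1],
      by rw [hτ₀p2, ← Category.assoc, hu, hj2]⟩
  refine ⟨⟨τ₀, hlargest⟩, ?_⟩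
  intro τ ⟨⟨j, hj1, hj2⟩, hNτ, hmax⟩
  simp only [kerPairRel] at hj1 hj2
  refine ⟨hNτ, ?_, ?_⟩
  · rw [← hj1, ← hj2]; exact (Category.assoc _ _ _).trans ((congrArg (fun g => (j : τ.R ⟶ pullback f f) ≫ g) (pullback.condition (f := f) (g := f))).trans (Category.assoc _ _ _).symm)
  · intro T t1 t2 hNt1 ht
    -- map τ₀ into τ using maximality
    obtain ⟨k, hk1, hk2⟩ := hmax τ₀ ⟨n, rfl, rfl⟩ hNn
    -- lift (t1, t2) to the pullback and then through the N-kernel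
    set l : T ⟶ pullback f f := pullback.lift t1 t2 ht with hl
    have hNl : N (l ≫ pullback.fst f f) := by
      rw [hl, pullback.lift_fst]; exact hNt1
    obtain ⟨u, hu, _⟩ := hn l hNl
    refine ⟨u ≫ k, ⟨?_, ?_⟩, ?_⟩
    · rw [Category.assoc, hk1, hτ₀p1, ← Category.assoc, hu, hl, pullback.lift_fst]
    · rw [Category.assoc, hk2, hτ₀p2, ← Category.assoc, hu, hl, pullback.lift_snd]
    · intro v ⟨hv1, hv2⟩
      apply τ.jm
      · rw [hv1, Category.assoc, hk1, hτ₀p1, ← Category.assoc, hu, hl, pullback.lift_fst]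
      · rw [hv2, Category.assoc, hk2, hτ₀p2, ← Category.assoc, hu, hl, pullback.lift_snd]

end Paper
end
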